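/- arXiv:1806.07162 — 8 statements merged into one kernel-verified Lean document; each statement's English description precedes it below -/
import Mathlib

section
/- Let n ≥ 2 and let λ_1, …, λ_n be complex numbers. For 0 ≤ k ≤ n let J_k = e_k(λ_1,…,λ_n) be the k-th elementary symmetric polynomial in λ_1,…,λ_n, with J_0 = 1 and J_k = 0 for k < 0 or k > n. Then the product over all pairs 1 ≤ i < j ≤ n of (λ_i + λ_j) equals the determinant of the (n−1)×(n−1) matrix whose (i,j) entry (rows and columns indexed 1,…,n−1) is J_{2i−j}. -/
open Finset

/-- The `k`-th elementary symmetric polynomial of `lam : Fin n → ℂ`, extended to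
integer indices `k` by `0` outside `0 ≤ k ≤ n` (with `e_0 = 1`). -/
noncomputable def esymZ (n : ℕ) (lam : Fin n → ℂ) (k : ℤ) : ℂ :=
  if 0 ≤ k ∧ k ≤ (n : ℤ) then
    ∑ s ∈ Finset.powersetCard k.toNat (Finset.univ : Finset (Fin n)), ∏ i ∈ s, lam i
  else 0

lemma esymZ_neg {n : ℕ} {lam : Fin n → ℂ} {k : ℤ} (h : k < 0) : esymZ n lam k = 0 := by
  simp [esymZ, not_le.2 h]

lemma esymZ_gt {n : ℕ} {lam : Fin n → ℂ} {k : ℤ} (h : (n : ℤ) < k) : esymZ n lam k = 0 := by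
  simp [esymZ, not_le.2 h]

lemma esymZ_eq (n : ℕ) (lam : Fin n → ℂ) (k : ℤ) (hk : 0 ≤ k) :
    esymZ n lam k = ∑ s ∈ Finset.powersetCard k.toNat (Finset.univ : Finset (Fin n)),
      ∏ i ∈ s, lam i := by
  rcases le_or_gt k (n : ℤ) with h | h
  · simp [esymZ, hk, h]
  · rw [esymZ_gt h]
    have : (Finset.univ : Finset (Fin n)).card < k.toNat := by
      simp only [Finset.card_univ, Fintype.card_fin]; omega
    rw [Finset.powersetCard_eq_empty.2 this, Finset.sum_empty]

lemma esymZ_zero (n : ℕ) (lam : Fin n → ℂ) : esymZ n lam 0 = 1 := by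
  rw [esymZ_eq n lam 0 le_rfl]
  simp

lemma esymZ_top (n : ℕ) (lam : Fin n → ℂ) : esymZ n lam (n : ℤ) = ∏ i, lam i := by
  rw [esymZ_eq n lam n (by positivity)]
  have : (Int.toNat n) = (Finset.univ : Finset (Fin n)).card := by simp
  rw [this, Finset.powersetCard_self, Finset.sum_singleton]

lemma mem_pcm {n j : ℕ} {t : Finset (Fin (n+1))}
    (ht : t ∈ powersetCard j ((univ : Finset (Fin n)).map Fin.castSuccEmb)) :
    Fin.last n ∉ t := by
  intro hmem
  have hsub := (mem_powersetCard.mp ht).1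
  have := hsub hmem
  simp only [mem_map, mem_univ, true_and, Fin.castSuccEmb_apply] at this
  obtain ⟨x, hx⟩ := this
  exact absurd hx (Fin.castSucc_lt_last x).ne

lemma sum_prod_map_castSucc {n j : ℕ} (lam : Fin (n+1) → ℂ) :
    ∑ s ∈ powersetCard j ((univ : Finset (Fin n)).map Fin.castSuccEmb), ∏ i ∈ s, lam i
      = ∑ s ∈ powersetCard j (univ : Finset (Fin n)), ∏ i ∈ s, lam (Fin.castSucc i) := by
  rw [Finset.powersetCard_map, Finset.sum_map]
  refine Finset.sum_congr rfl fun t _ => ?_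
  rw [RelEmbedding.coe_toEmbedding, Finset.mapEmbedding_apply, Finset.prod_map]
  rfl

-- ℕ-level recurrence for elementary symmetric sums
lemma esym_nat_rec (n : ℕ) (lam : Fin (n + 1) → ℂ) (j : ℕ) :
    ∑ s ∈ powersetCard (j + 1) (univ : Finset (Fin (n + 1))), ∏ i ∈ s, lam i
      = (∑ s ∈ powersetCard (j + 1) (univ : Finset (Fin n)), ∏ i ∈ s, lam (Fin.castSucc i))
        + lam (Fin.last n) *
          ∑ s ∈ powersetCard j (univ : Finset (Fin n)), ∏ i ∈ s, lam (Fin.castSucc i) := by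
  have hnot : Fin.last n ∉ (univ : Finset (Fin n)).map Fin.castSuccEmb := by
    simp only [mem_map, mem_univ, true_and, Fin.castSuccEmb_apply]
    rintro ⟨x, hx⟩
    exact absurd hx (Fin.castSucc_lt_last x).ne
  rw [Fin.univ_castSuccEmb, Finset.cons_eq_insert, powersetCard_succ_insert hnot]
  rw [Finset.sum_union]
  · congr 1
    · exact sum_prod_map_castSucc lam
    · rw [Finset.sum_image]
      · rw [← sum_prod_map_castSucc lam, Finset.mul_sum]
        refine Finset.sum_congr rfl fun t ht => ?_
        rw [Finset.prod_insert (mem_pcm ht)]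
      · intro t₁ h₁ t₂ h₂ heq
        have e1 := congrArg (Finset.erase · (Fin.last n)) heq
        simpa [Finset.erase_insert (mem_pcm h₁), Finset.erase_insert (mem_pcm h₂)] using e1
  · rw [Finset.disjoint_left]
    intro t ht₁ ht₂
    obtain ⟨t', _, rfl⟩ := Finset.mem_image.mp ht₂
    exact mem_pcm ht₁ (Finset.mem_insert_self _ _)

lemma esymZ_rec (n : ℕ) (lam : Fin (n + 1) → ℂ) (k : ℤ) :
    esymZ (n + 1) lam k
      = esymZ n (fun i => lam (Fin.castSucc i)) k
        + lam (Fin.last n) * esymZ n (fun i => lam (Fin.castSucc i)) (k - 1) := by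
  rcases lt_trichotomy k 0 with h | h | h
  · rw [esymZ_neg h, esymZ_neg h, esymZ_neg (by omega), mul_zero, add_zero]
  · subst h
    rw [esymZ_zero, esymZ_zero, esymZ_neg (by norm_num), mul_zero, add_zero]
  · obtain ⟨j, rfl⟩ : ∃ j : ℕ, k = (j : ℤ) + 1 := ⟨(k - 1).toNat, by omega⟩
    rw [esymZ_eq _ _ _ (by positivity), esymZ_eq _ _ _ (by positivity),
      esymZ_eq _ _ ((j : ℤ) + 1 - 1) (by omega)]
    have h1 : ((j : ℤ) + 1).toNat = j + 1 := by omega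
    have h2 : ((j : ℤ) + 1 - 1).toNat = j := by omega
    rw [h1, h2]
    exact esym_nat_rec n lam j

lemma sum_esymZ_pow (n : ℕ) (lam : Fin n → ℂ) (μ : ℂ) :
    ∑ k ∈ range (n + 1), esymZ n lam (k : ℤ) * μ ^ (n - k) = ∏ i, (lam i + μ) := by
  rw [Finset.prod_add]
  rw [Finset.powerset_card_disjiUnion]
  erw [Finset.sum_disjiUnion]
  simp only [Finset.card_univ, Fintype.card_fin]
  refine Finset.sum_congr rfl fun k hk => ?_
  rw [Finset.mem_range] at hk
  rw [esymZ_eq _ _ _ (by positivity), Int.toNat_natCast, Finset.sum_mul]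
  refine Finset.sum_congr rfl fun t ht => ?_
  obtain ⟨hsub, hcard⟩ := Finset.mem_powersetCard.mp ht
  rw [Finset.prod_const, Finset.card_sdiff_of_subset hsub]
  simp [hcard]

lemma Iio_castSucc_eq {n : ℕ} (j : Fin n) :
    Finset.Iio (Fin.castSucc j) = (Finset.Iio j).map Fin.castSuccEmb := by
  ext x
  simp only [Finset.mem_Iio, Finset.mem_map, Fin.castSuccEmb_apply]
  constructor
  · intro hx
    have hxv : (x : ℕ) < (j : ℕ) := by
      simpa [Fin.lt_def] using hx
    refine ⟨⟨x, lt_trans hxv j.isLt⟩, ?_, ?_⟩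
    · simpa [Fin.lt_def] using hxv
    · ext; simp
  · rintro ⟨y, hy, rfl⟩
    exact_mod_cast hy

lemma Iio_last_eq (n : ℕ) :
    Finset.Iio (Fin.last n) = (univ : Finset (Fin n)).map Fin.castSuccEmb := by
  ext x
  simp only [Finset.mem_Iio, Finset.mem_map, Finset.mem_univ, true_and, Fin.castSuccEmb_apply]
  constructor
  · intro hx
    exact ⟨⟨x, by simpa [Fin.lt_iff_val_lt_val] using hx⟩, by ext; simp⟩
  · rintro ⟨y, rfl⟩
    exact Fin.castSucc_lt_last y

lemma prod_split (n : ℕ) (lam : Fin (n + 1) → ℂ) :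
    ∏ j : Fin (n + 1), ∏ i ∈ Finset.Iio j, (lam i + lam j)
      = (∏ j : Fin n, ∏ i ∈ Finset.Iio j, (lam (Fin.castSucc i) + lam (Fin.castSucc j)))
        * ∏ i : Fin n, (lam (Fin.castSucc i) + lam (Fin.last n)) := by
  rw [Fin.prod_univ_castSucc]
  congr 1
  · refine Finset.prod_congr rfl fun j _ => ?_
    rw [Iio_castSucc_eq, Finset.prod_map]
    rfl
  · rw [Iio_last_eq, Finset.prod_map]
    rfl

noncomputable def AhatM (n : ℕ) (a : ℤ → ℂ) : Matrix (Fin (n+1)) (Fin (n+2)) ℂ :=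
  Matrix.of fun i c => a (2 * ((i : ℕ) : ℤ) + 1 - ((c : ℕ) : ℤ))

noncomputable def vV (a : ℤ → ℂ) {m : ℕ} : Fin m → ℂ :=
  fun c => (-1) ^ (c : ℕ) * a ((c : ℕ) : ℤ)

-- F1 : the alternating vector is in the kernel
lemma Ahat_mulVec_v (n : ℕ) (a : ℤ → ℂ) (h0 : ∀ k : ℤ, k < 0 → a k = 0)
    (h1 : ∀ k : ℤ, (n : ℤ) + 1 < k → a k = 0) (i : Fin (n+1)) :
    ∑ c : Fin (n+2), AhatM n a i c * vV a c = 0 := by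
  have hI : (2 * ((i : ℕ) : ℤ) + 1) = (2 * (i : ℕ) + 1 : ℕ) := by push_cast; ring
  set I : ℤ := 2 * ((i : ℕ) : ℤ) + 1 with hIdef
  have hI2 : I = 2 * ((i : ℕ) : ℤ) + 1 := hIdef
  set F : ℤ → ℂ := fun c => (-1) ^ c.toNat * a c * a (I - c) with hF
  have step1 : ∑ c : Fin (n+2), AhatM n a i c * vV a c
      = ∑ c ∈ Finset.range (n+2), F ((c : ℕ) : ℤ) := by
    rw [← Fin.sum_univ_eq_sum_range (fun c => F ((c : ℕ) : ℤ)) (n+2)]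
    refine Finset.sum_congr rfl fun c _ => ?_
    simp only [hF, AhatM, vV, Matrix.of_apply, Int.toNat_natCast, ← hIdef]
    ring
  have hmap : Finset.Icc (0:ℤ) ((n : ℤ) + 1)
      = (Finset.range (n+2)).map ⟨Nat.cast, Nat.cast_injective⟩ := by
    ext x
    simp only [Finset.mem_Icc, Finset.mem_map, Finset.mem_range, Function.Embedding.coeFn_mk]
    constructor
    · intro hx; exact ⟨x.toNat, by omega, by omega⟩
    · rintro ⟨m, hm, rfl⟩; omega
  have step2 : ∑ c ∈ Finset.range (n+2), F ((c : ℕ) : ℤ)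
      = ∑ c ∈ Finset.Icc (0:ℤ) ((n : ℤ) + 1), F c := by
    rw [hmap, Finset.sum_map]; rfl
  have hsub1 : ∑ c ∈ Finset.Icc (0:ℤ) ((n : ℤ) + 1), F c
      = ∑ c ∈ Finset.Icc (0:ℤ) (max ((n : ℤ) + 1) I), F c := by
    refine Finset.sum_subset (Finset.Icc_subset_Icc le_rfl (le_max_left _ _)) ?_
    intro x hx hnx
    simp only [Finset.mem_Icc] at hx hnx
    have : ((n : ℤ) + 1) < x := by omega
    simp [hF, h1 x this]
  have hsub2 : ∑ c ∈ Finset.Icc (0:ℤ) I, F c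
      = ∑ c ∈ Finset.Icc (0:ℤ) (max ((n : ℤ) + 1) I), F c := by
    refine Finset.sum_subset (Finset.Icc_subset_Icc le_rfl (le_max_right _ _)) ?_
    intro x hx hnx
    simp only [Finset.mem_Icc] at hx hnx
    have : I - x < 0 := by omega
    simp [hF, h0 _ this]
  have hinv : ∑ c ∈ Finset.Icc (0:ℤ) I, F c = 0 := by
    refine Finset.sum_involution (fun c _ => I - c) ?_ ?_ ?_ ?_
    · intro c hc
      simp only [Finset.mem_Icc] at hc
      have hpq : c.toNat + (I - c).toNat = 2 * (i : ℕ) + 1 := by omega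
      set p := c.toNat
      set q := (I - c).toNat
      have hodd : (-1 : ℂ) ^ p * (-1 : ℂ) ^ q = -1 := by
        rw [← pow_add, hpq]; exact Odd.neg_one_pow ⟨(i : ℕ), by ring⟩
      have hp2 : (-1 : ℂ) ^ p * (-1 : ℂ) ^ p = 1 := by
        rw [← pow_add]; exact Even.neg_one_pow ⟨p, by ring⟩
      have hq : (-1 : ℂ) ^ q = (-1 : ℂ) ^ p * (-1) := by
        calc (-1:ℂ)^q = ((-1:ℂ)^p * (-1:ℂ)^p) * (-1:ℂ)^q := by rw [hp2, one_mul]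
        _ = (-1:ℂ)^p * ((-1:ℂ)^p * (-1:ℂ)^q) := by ring
        _ = (-1:ℂ)^p * (-1) := by rw [hodd]
      simp only [hF]
      rw [sub_sub_cancel, hq]
      ring
    · intro c hc _
      simp only [Finset.mem_Icc] at hc
      show I - c ≠ c
      omega
    · intro c hc
      simp only [Finset.mem_Icc] at hc ⊢
      omega
    · intro c hc
      ring
  rw [step1, step2, hsub1, ← hsub2, hinv]

noncomputable def CmM (n : ℕ) (μ : ℂ) : Matrix (Fin (n+2)) (Fin (n+1)) ℂ :=
  Matrix.of fun c j => (if c = Fin.castSucc j then 1 else 0) + (if c = Fin.succ j then μ else 0)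

noncomputable def LM (n : ℕ) (μ : ℂ) : Matrix (Fin (n+2)) (Fin (n+2)) ℂ :=
  Matrix.of fun i k => if (k : ℕ) ≤ (i : ℕ) then (-μ) ^ ((i : ℕ) - (k : ℕ)) else 0

noncomputable def M2M (n : ℕ) (a : ℤ → ℂ) (μ : ℂ) : Matrix (Fin (n+2)) (Fin (n+2)) ℂ :=
  Matrix.of fun c j => Fin.cases (vV a c) (fun j' => CmM n μ c j') j

lemma sum_mul_ite_one {m : ℕ} (g : Fin m → ℂ) (b : Fin m) (x : ℂ) :
    ∑ c : Fin m, g c * (if c = b then x else 0) = g b * x := by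
  rw [Finset.sum_eq_single b]
  · simp
  · intro c _ hc; simp [hc]
  · intro h; exact absurd (Finset.mem_univ b) h

lemma sum_mul_Cm {m : ℕ} (g : Fin (m+2) → ℂ) (μ : ℂ) (j : Fin (m+1)) :
    ∑ c : Fin (m+2), g c * CmM m μ c j = g (Fin.castSucc j) + g (Fin.succ j) * μ := by
  simp only [CmM, Matrix.of_apply, mul_add, Finset.sum_add_distrib]
  rw [sum_mul_ite_one, sum_mul_ite_one, mul_one]

lemma sum_L_mul_Cm (n : ℕ) (μ : ℂ) (c : Fin (n+2)) (j' : Fin (n+1)) :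
    ∑ k : Fin (n+2), LM n μ c k * CmM n μ k j' = if c = Fin.castSucc j' then 1 else 0 := by
  rw [sum_mul_Cm]
  simp only [LM, Matrix.of_apply, Fin.coe_castSucc, Fin.val_succ, Fin.ext_iff]
  rcases lt_trichotomy ((c : ℕ)) ((j' : ℕ)) with hlt | heq | hgt
  · rw [if_neg (by omega), if_neg (by omega), if_neg (by omega)]
    ring
  · rw [if_pos (by omega), if_neg (by omega), if_pos heq]
    have : (c : ℕ) - (j' : ℕ) = 0 := by omega
    rw [this, pow_zero]; ring
  · rw [if_pos (by omega), if_pos (by omega), if_neg (by omega)]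
    have h : (c : ℕ) - (j' : ℕ) = ((c : ℕ) - ((j' : ℕ) + 1)) + 1 := by omega
    rw [h, pow_succ]
    ring

lemma detLM (n : ℕ) (μ : ℂ) : (LM n μ).det = 1 := by
  have hbt : (LM n μ).BlockTriangular OrderDual.toDual := by
    intro i j h
    have : (i : ℕ) < (j : ℕ) := h
    simp only [LM, Matrix.of_apply]
    rw [if_neg (by omega)]
  rw [Matrix.det_of_lowerTriangular _ hbt]
  have : ∀ i : Fin (n+2), LM n μ i i = 1 := by
    intro i; simp [LM]
  simp [this]

lemma detM2 (n : ℕ) (a : ℤ → ℂ) (μ : ℂ) :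
    (M2M n a μ).det = ∑ k ∈ Finset.range (n+2), a k * μ ^ (n+1-k) := by
  have hLM2 : ((LM n μ) * (M2M n a μ)).det = ∑ k ∈ Finset.range (n+2), a k * μ ^ (n+1-k) := by
    rw [Matrix.det_succ_row _ (Fin.last (n+1))]
    rw [Finset.sum_eq_single (0 : Fin (n+2))]
    · -- main term
      have hentry : ((LM n μ) * (M2M n a μ)) (Fin.last (n+1)) 0
          = ∑ k : Fin (n+2), LM n μ (Fin.last (n+1)) k * vV a k := by
        rw [Matrix.mul_apply]
        refine Finset.sum_congr rfl fun k _ => ?_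
        simp [M2M]
      have hsub : ((LM n μ) * (M2M n a μ)).submatrix (Fin.last (n+1)).succAbove
          (0 : Fin (n+2)).succAbove = 1 := by
        ext i j
        simp only [Matrix.submatrix_apply, Fin.succAbove_last, Fin.succAbove_zero]
        rw [Matrix.mul_apply]
        have : ∀ k, M2M n a μ k (Fin.succ j) = CmM n μ k j := fun k => by simp [M2M]
        simp only [this]
        rw [sum_L_mul_Cm]
        simp [Matrix.one_apply, Fin.castSucc_inj]
      rw [hentry, hsub, Matrix.det_one, mul_one]
      have hval : ∀ k : Fin (n+2), LM n μ (Fin.last (n+1)) k * vV a k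
          = (-1:ℂ)^(n+1) * (a ((k:ℕ):ℤ) * μ ^ (n+1-(k:ℕ))) := by
        intro k
        have hk : (k : ℕ) ≤ n + 1 := by omega
        simp only [LM, vV, Matrix.of_apply, Fin.val_last]
        rw [if_pos hk, neg_pow]
        have hsgn : (-1:ℂ)^(n+1-(k:ℕ)) * (-1:ℂ)^(k:ℕ) = (-1:ℂ)^(n+1) := by
          rw [← pow_add]; congr 1; omega
        calc (-1:ℂ)^(n+1-(k:ℕ)) * μ^(n+1-(k:ℕ)) * ((-1:ℂ)^(k:ℕ) * a ((k:ℕ):ℤ))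
            = ((-1:ℂ)^(n+1-(k:ℕ)) * (-1:ℂ)^(k:ℕ)) * (μ^(n+1-(k:ℕ)) * a ((k:ℕ):ℤ)) := by ring
        _ = (-1:ℂ)^(n+1) * (a ((k:ℕ):ℤ) * μ ^ (n+1-(k:ℕ))) := by rw [hsgn]; ring
      simp only [hval]
      rw [← Finset.mul_sum, Fin.val_last, Fin.val_zero, add_zero, ← mul_assoc, ← pow_add,
        Fin.sum_univ_eq_sum_range (fun k => a (k:ℤ) * μ ^ (n+1-k)) (n+2)]
      have : (-1:ℂ)^(n+1+(n+1)) = 1 := Even.neg_one_pow ⟨n+1, by ring⟩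
      rw [this, one_mul]
    · -- other terms vanish
      intro j _ hj
      obtain ⟨j', rfl⟩ := Fin.exists_succ_eq.mpr hj
      have : ((LM n μ) * (M2M n a μ)) (Fin.last (n+1)) (Fin.succ j') = 0 := by
        rw [Matrix.mul_apply]
        have : ∀ k, M2M n a μ k (Fin.succ j') = CmM n μ k j' := fun k => by simp [M2M]
        simp only [this]
        rw [sum_L_mul_Cm]
        rw [if_neg]
        exact (Fin.castSucc_lt_last j').ne'
      rw [this, mul_zero, zero_mul]
    · intro h; exact absurd (Finset.mem_univ _) h
  rw [← one_mul (M2M n a μ).det, ← detLM n μ, ← Matrix.det_mul, hLM2]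

noncomputable def M1M (n : ℕ) (a : ℤ → ℂ) : Matrix (Fin (n+2)) (Fin (n+2)) ℂ :=
  Matrix.of fun i c => Fin.cases (if c = Fin.last (n+1) then (1:ℂ) else 0)
    (fun i' => AhatM n a i' c) i





lemma detM1 (n : ℕ) (a : ℤ → ℂ) (h1 : ∀ k : ℤ, (n : ℤ) + 1 < k → a k = 0) :
    (M1M n a).det = (-1:ℂ)^(n+1) * (a ((n:ℤ)+1) *
      (Matrix.of fun i j : Fin n => a (2*((i:ℕ):ℤ)+1-((j:ℕ):ℤ))).det) := by
  rw [Matrix.det_succ_row_zero]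
  rw [Finset.sum_eq_single (Fin.last (n+1))]
  · have hentry : M1M n a 0 (Fin.last (n+1)) = 1 := by simp [M1M]
    have hsub : (M1M n a).submatrix Fin.succ (Fin.last (n+1)).succAbove
        = Matrix.of fun i j : Fin (n+1) => AhatM n a i (Fin.castSucc j) := by
      ext i j
      simp [M1M, Fin.succAbove_last]
    rw [hentry, hsub, mul_one, Fin.val_last]
    congr 1
    -- det of Ahat0
    rw [Matrix.det_succ_row _ (Fin.last n)]
    rw [Finset.sum_eq_single (Fin.last n)]
    · have h2 : (AhatM n a (Fin.last n) (Fin.castSucc (Fin.last n))) = a ((n:ℤ)+1) := by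
        simp only [AhatM, Matrix.of_apply, Fin.coe_castSucc, Fin.val_last]
        congr 1
        ring
      have hsgn : (-1:ℂ)^((Fin.last n : ℕ) + (Fin.last n : ℕ)) = 1 :=
        Even.neg_one_pow ⟨n, by simp [Fin.val_last]⟩
      have hsub2 : ((Matrix.of fun i j : Fin (n+1) => AhatM n a i (Fin.castSucc j)).submatrix
          (Fin.last n).succAbove (Fin.last n).succAbove)
          = Matrix.of fun i j : Fin n => a (2*((i:ℕ):ℤ)+1-((j:ℕ):ℤ)) := by
        ext i j
        simp [AhatM, Fin.succAbove_last]
      rw [hsgn, hsub2, Matrix.of_apply, h2, one_mul]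
    · intro j _ hj
      have hjv : (j : ℕ) < n := by
        have := j.isLt
        have hne : (j : ℕ) ≠ n := fun h => hj (Fin.ext (by simp [Fin.val_last, h]))
        omega
      have : AhatM n a (Fin.last n) (Fin.castSucc j) = 0 := by
        simp only [AhatM, Matrix.of_apply, Fin.coe_castSucc, Fin.val_last]
        exact h1 _ (by omega)
      rw [Matrix.of_apply, this, mul_zero, zero_mul]
    · intro h; exact absurd (Finset.mem_univ _) h
  · intro j _ hj
    have : M1M n a 0 j = 0 := by simp [M1M, hj]
    rw [this, mul_zero, zero_mul]
  · intro h; exact absurd (Finset.mem_univ _) h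

lemma detProd (n : ℕ) (a : ℤ → ℂ) (μ : ℂ) (h0 : ∀ k : ℤ, k < 0 → a k = 0)
    (h1 : ∀ k : ℤ, (n : ℤ) + 1 < k → a k = 0) :
    ((M1M n a) * (M2M n a μ)).det = (-1:ℂ)^(n+1) * (a ((n:ℤ)+1) *
      (Matrix.of fun i j : Fin (n+1) =>
        a (2*((i:ℕ):ℤ)+1-((j:ℕ):ℤ)) + μ * a (2*((i:ℕ):ℤ)-((j:ℕ):ℤ))).det) := by
  rw [Matrix.det_succ_column_zero]
  rw [Finset.sum_eq_single (0 : Fin (n+2))]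
  · have hentry : ((M1M n a) * (M2M n a μ)) 0 0 = (-1:ℂ)^(n+1) * a ((n:ℤ)+1) := by
      rw [Matrix.mul_apply]
      have : ∀ c, M1M n a 0 c * M2M n a μ c 0
          = vV a c * (if c = Fin.last (n+1) then (1:ℂ) else 0) := by
        intro c; simp only [M1M, M2M, Matrix.of_apply, Fin.cases_zero]; ring
      rw [Finset.sum_congr rfl fun c _ => this c, sum_mul_ite_one, mul_one]
      simp only [vV, Fin.val_last]
      have hc : (((n+1 : ℕ)) : ℤ) = (n:ℤ)+1 := by push_cast; ring
      rw [hc]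
    have hsub : ((M1M n a) * (M2M n a μ)).submatrix (0 : Fin (n+2)).succAbove Fin.succ
        = Matrix.of fun i j : Fin (n+1) =>
          a (2*((i:ℕ):ℤ)+1-((j:ℕ):ℤ)) + μ * a (2*((i:ℕ):ℤ)-((j:ℕ):ℤ)) := by
      ext i j
      simp only [Matrix.submatrix_apply, Fin.succAbove_zero]
      rw [Matrix.mul_apply]
      have : ∀ c, M1M n a (Fin.succ i) c * M2M n a μ c (Fin.succ j)
          = AhatM n a i c * CmM n μ c j := by
        intro c; simp [M1M, M2M]
      rw [Finset.sum_congr rfl fun c _ => this c, sum_mul_Cm]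
      simp only [AhatM, Matrix.of_apply, Fin.coe_castSucc, Fin.val_succ, Matrix.of_apply]
      have harg : 2*((i:ℕ):ℤ)+1-(((j:ℕ)+1 : ℕ):ℤ) = 2*((i:ℕ):ℤ)-((j:ℕ):ℤ) := by
        push_cast; ring
      rw [harg, mul_comm (a (2*((i:ℕ):ℤ)-((j:ℕ):ℤ))) μ]
    rw [hentry, hsub, Fin.val_zero, pow_zero, one_mul]
    ring
  · intro i _ hi
    obtain ⟨i', rfl⟩ := Fin.exists_succ_eq.mpr hi
    have : ((M1M n a) * (M2M n a μ)) (Fin.succ i') 0 = 0 := by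
      rw [Matrix.mul_apply]
      have : ∀ c, M1M n a (Fin.succ i') c * M2M n a μ c 0 = AhatM n a i' c * vV a c := by
        intro c; simp [M1M, M2M]
      rw [Finset.sum_congr rfl fun c _ => this c]
      exact Ahat_mulVec_v n a h0 h1 i'
    rw [this, mul_zero, zero_mul]
  · intro h; exact absurd (Finset.mem_univ _) h

lemma key (n : ℕ) (a : ℤ → ℂ) (μ : ℂ) (h0 : ∀ k : ℤ, k < 0 → a k = 0)
    (h1 : ∀ k : ℤ, (n : ℤ) + 1 < k → a k = 0) :
    a ((n : ℤ) + 1) * (Matrix.of fun i j : Fin (n+1) =>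
        a (2*((i:ℕ):ℤ)+1-((j:ℕ):ℤ)) + μ * a (2*((i:ℕ):ℤ)-((j:ℕ):ℤ))).det
      = a ((n : ℤ) + 1) * ((∑ k ∈ Finset.range (n + 2), a (k : ℤ) * μ ^ (n + 1 - k)) *
          (Matrix.of fun i j : Fin n => a (2*((i:ℕ):ℤ)+1-((j:ℕ):ℤ))).det) := by
  have hs0 : ((-1:ℂ)^(n+1)) ≠ 0 := pow_ne_zero _ (by norm_num)
  apply mul_left_cancel₀ hs0
  calc (-1:ℂ)^(n+1) * (a ((n : ℤ) + 1) * (Matrix.of fun i j : Fin (n+1) =>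
        a (2*((i:ℕ):ℤ)+1-((j:ℕ):ℤ)) + μ * a (2*((i:ℕ):ℤ)-((j:ℕ):ℤ))).det)
      = ((M1M n a) * (M2M n a μ)).det := (detProd n a μ h0 h1).symm
    _ = (M1M n a).det * (M2M n a μ).det := Matrix.det_mul _ _
    _ = ((-1:ℂ)^(n+1) * (a ((n:ℤ)+1) *
          (Matrix.of fun i j : Fin n => a (2*((i:ℕ):ℤ)+1-((j:ℕ):ℤ))).det))
        * (∑ k ∈ Finset.range (n+2), a k * μ ^ (n+1-k)) := by
        rw [detM1 n a h1, detM2]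
    _ = (-1:ℂ)^(n+1) * (a ((n : ℤ) + 1) *
        ((∑ k ∈ Finset.range (n + 2), a (k : ℤ) * μ ^ (n + 1 - k)) *
          (Matrix.of fun i j : Fin n => a (2*((i:ℕ):ℤ)+1-((j:ℕ):ℤ))).det)) := by ring

lemma main_ind (n : ℕ) : ∀ lam : Fin (n+1) → ℂ,
    (∏ j : Fin (n+1), ∏ i ∈ Finset.Iio j, (lam i + lam j)) =
      (Matrix.of fun i j : Fin n => esymZ (n+1) lam (2*((i:ℕ):ℤ)+1-((j:ℕ):ℤ))).det := by
  induction n with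
  | zero =>
      intro lam
      rw [Matrix.det_isEmpty]
      have h : Finset.Iio (0 : Fin 1) = ∅ := by
        ext x
        simp [Fin.lt_def]
      rw [Fin.prod_univ_one, h, Finset.prod_empty]
  | succ n IH =>
      intro lam
      have hgood : ∀ t : ℂ, (∏ i : Fin (n+1), (lam (Fin.castSucc i) + t)) ≠ 0 →
          (∏ j : Fin (n+2), ∏ i ∈ Finset.Iio j, ((lam i + t) + (lam j + t))) =
            (Matrix.of fun i j : Fin (n+1) =>
              esymZ (n+2) (fun x => lam x + t) (2*((i:ℕ):ℤ)+1-((j:ℕ):ℤ))).det := by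
        intro t ht
        set lt : Fin (n+2) → ℂ := fun x => lam x + t with hlt
        have h0 : ∀ k : ℤ, k < 0 → esymZ (n+1) (fun i => lt (Fin.castSucc i)) k = 0 :=
          fun k hk => esymZ_neg hk
        have h1 : ∀ k : ℤ, ((n:ℤ)+1) < k → esymZ (n+1) (fun i => lt (Fin.castSucc i)) k = 0 :=
          fun k hk => esymZ_gt (by push_cast; omega)
        have hncast : ((n:ℤ)+1) = ((n+1 : ℕ):ℤ) := by push_cast; ring
        have han : esymZ (n+1) (fun i => lt (Fin.castSucc i)) ((n:ℤ)+1) ≠ 0 := by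
          rw [hncast, esymZ_top]
          exact ht
        have hB : (Matrix.of fun i j : Fin (n+1) => esymZ (n+2) lt (2*((i:ℕ):ℤ)+1-((j:ℕ):ℤ)))
            = Matrix.of fun i j : Fin (n+1) =>
              esymZ (n+1) (fun i => lt (Fin.castSucc i)) (2*((i:ℕ):ℤ)+1-((j:ℕ):ℤ))
              + lt (Fin.last (n+1)) *
                esymZ (n+1) (fun i => lt (Fin.castSucc i)) (2*((i:ℕ):ℤ)-((j:ℕ):ℤ)) := by
          ext i j
          simp only [Matrix.of_apply]
          rw [esymZ_rec (n+1) lt]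
          have harg : (2*((i:ℕ):ℤ)+1-((j:ℕ):ℤ)) - 1 = 2*((i:ℕ):ℤ)-((j:ℕ):ℤ) := by ring
          rw [harg]
        have hkey := key n (fun k => esymZ (n+1) (fun i => lt (Fin.castSucc i)) k)
          (lt (Fin.last (n+1))) h0 h1
        have hcancel := mul_left_cancel₀ han hkey
        calc (∏ j : Fin (n+2), ∏ i ∈ Finset.Iio j, ((lam i + t) + (lam j + t)))
            = ∏ j : Fin (n+2), ∏ i ∈ Finset.Iio j, (lt i + lt j) := by rfl
          _ = (∏ j : Fin (n+1), ∏ i ∈ Finset.Iio j,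
                (lt (Fin.castSucc i) + lt (Fin.castSucc j)))
              * ∏ i : Fin (n+1), (lt (Fin.castSucc i) + lt (Fin.last (n+1))) :=
            prod_split (n+1) lt
          _ = (Matrix.of fun i j : Fin n =>
                esymZ (n+1) (fun i => lt (Fin.castSucc i)) (2*((i:ℕ):ℤ)+1-((j:ℕ):ℤ))).det
              * ∑ k ∈ range (n+2),
                  esymZ (n+1) (fun i => lt (Fin.castSucc i)) (k : ℤ)
                    * (lt (Fin.last (n+1))) ^ (n+1-k) := by
            rw [IH (fun i => lt (Fin.castSucc i)), sum_esymZ_pow]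
          _ = (Matrix.of fun i j : Fin (n+1) =>
                esymZ (n+2) lt (2*((i:ℕ):ℤ)+1-((j:ℕ):ℤ))).det := by
            rw [hB, hcancel]
            ring
      -- continuity + density
      have hfin : ({t : ℂ | (∏ i : Fin (n+1), (lam (Fin.castSucc i) + t)) = 0}).Finite := by
        apply Set.Finite.subset (Set.finite_range fun i : Fin (n+1) => -lam (Fin.castSucc i))
        intro t htz
        simp only [Set.mem_setOf_eq] at htz
        obtain ⟨i, _, hi⟩ := Finset.prod_eq_zero_iff.mp htz
        exact ⟨i, by linear_combination -hi⟩
      have hdense : Dense {t : ℂ | (∏ i : Fin (n+1), (lam (Fin.castSucc i) + t)) ≠ 0} :=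
        hfin.countable.dense_compl ℂ
      have hcf : Continuous fun t : ℂ =>
          ∏ j : Fin (n+2), ∏ i ∈ Finset.Iio j, ((lam i + t) + (lam j + t)) := by
        apply continuous_finset_prod
        intro j _
        apply continuous_finset_prod
        intro i _
        fun_prop
      have hcg : Continuous fun t : ℂ => (Matrix.of fun i j : Fin (n+1) =>
          esymZ (n+2) (fun x => lam x + t) (2*((i:ℕ):ℤ)+1-((j:ℕ):ℤ))).det := by
        apply Continuous.matrix_det
        apply continuous_matrix
        intro i j
        show Continuous fun t : ℂ => esymZ (n+2) (fun x => lam x + t) (2*((i:ℕ):ℤ)+1-((j:ℕ):ℤ))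
        unfold esymZ
        by_cases hk : 0 ≤ (2*((i:ℕ):ℤ)+1-((j:ℕ):ℤ)) ∧ (2*((i:ℕ):ℤ)+1-((j:ℕ):ℤ)) ≤ ((n+2 : ℕ) : ℤ)
        · simp only [if_pos hk]
          apply continuous_finset_sum
          intro s _
          apply continuous_finset_prod
          intro x _
          fun_prop
        · simp only [if_neg hk]
          exact continuous_const
      have heq := Continuous.ext_on hdense hcf hcg hgood
      have h0' := congrFun heq 0
      simpa using h0'

theorem det_secondAdditiveCompound_eq_det_esymm_matrix
    (n : ℕ) (hn : 2 ≤ n) (lam : Fin n → ℂ) :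
    (∏ j : Fin n, ∏ i ∈ Finset.Iio j, (lam i + lam j)) =
      Matrix.det (Matrix.of fun i j : Fin (n - 1) =>
        esymZ n lam (2 * ((i : ℕ) : ℤ) + 2 - (((j : ℕ) : ℤ) + 1))) := by
  obtain ⟨m, rfl⟩ : ∃ m, n = m + 1 := ⟨n - 1, by omega⟩
  rw [main_ind m lam]
  congr 1
  ext i j
  simp only [Matrix.of_apply]
  congr 1
  ring
end

section
/- Let n ≥ 2 and let M be an n×n complex matrix with eigenvalues λ_1, …, λ_n listed with algebraic multiplicity (i.e. the characteristic polynomial of M is ∏_{i=1}^n (X − λ_i)). For 1 ≤ k ≤ n let J_k denote the sum of the k×k principal minors of M, i.e. (−1)^k times the coefficient of X^{n−k} in det(XI − M); set J_0 = 1 and J_k = 0 for k < 0 or k > n. Then ∏_{1 ≤ i < j ≤ n}(λ_i + λ_j), the determinant of the second additive compound of M, equals the determinant of the (n−1)×(n−1) matrix whose (i,j) entry (1-indexed) is J_{2i−j}. -/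
open Polynomial Finset Matrix

section Generic
variable {R : Type*} [CommRing R] {n : ℕ}

variable {R : Type*} [CommRing R] {n : ℕ}

def ES (s : Finset (Fin n)) (x : Fin n → R) (k : ℕ) : R :=
  ∑ t ∈ s.powersetCard k, ∏ l ∈ t, x l

def EZ (x : Fin n → R) (m : ℤ) : R :=
  if 0 ≤ m ∧ m ≤ (n : ℤ) then ES Finset.univ x m.toNat else 0

lemma ES_neg (s : Finset (Fin n)) (x : Fin n → R) (k : ℕ) :
    ES s (fun l => - x l) k = (-1) ^ k * ES s x k := by
  unfold ES
  rw [Finset.mul_sum]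
  refine Finset.sum_congr rfl fun t ht => ?_
  have hc : t.card = k := (Finset.mem_powersetCard.1 ht).2
  calc ∏ l ∈ t, -x l = ∏ l ∈ t, (-1) * x l := by simp
  _ = (-1)^k * ∏ l ∈ t, x l := by rw [Finset.prod_mul_distrib, Finset.prod_const, hc]

lemma natDegree_prod_X_add_C_le (s : Finset (Fin n)) (x : Fin n → R) :
    (∏ l ∈ s, (X + C (x l))).natDegree ≤ s.card := by
  refine le_trans (Polynomial.natDegree_prod_le _ _) ?_
  apply le_trans (Finset.sum_le_card_nsmul _ _ 1 ?_)
  · simp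
  · intro l _
    refine le_trans (Polynomial.natDegree_add_le _ _) ?_
    simp [Polynomial.natDegree_X_le]

lemma coeff_prod_X_add_C (s : Finset (Fin n)) (x : Fin n → R) {k : ℕ} (hk : k ≤ s.card) :
    (∏ l ∈ s, (X + C (x l))).coeff (s.card - k) = ES s x k := by
  rw [Finset.prod_X_add_C_coeff _ _ (Nat.sub_le _ _)]
  rw [Nat.sub_sub_self hk]
  rfl

lemma coeff_prod_X_add_C_eq_zero (s : Finset (Fin n)) (x : Fin n → R) {k : ℕ}
    (hk : s.card < k) : (∏ l ∈ s, (X + C (x l))).coeff k = 0 :=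
  Polynomial.coeff_eq_zero_of_natDegree_lt (lt_of_le_of_lt (natDegree_prod_X_add_C_le s x) hk)

lemma lemB (x : Fin n → R) (i k : Fin n) :
    ∑ j : Fin n, EZ x (2 * ((i : ℕ) : ℤ) - ((j : ℕ) : ℤ)) * ((-1) ^ (j : ℕ) * ES (Finset.univ.erase k) x (j : ℕ))
      = (-1) ^ (i : ℕ) * ES (Finset.univ.erase k) (fun l => x l ^ 2) (i : ℕ) := by
  classical
  have hn : 0 < n := k.pos
  set c : ℕ := n - 1 with hc
  have hnc : n = c + 1 := by omega
  set s : Finset (Fin n) := Finset.univ.erase k with hsdef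
  have hs : s.card = c := by
    rw [hsdef, Finset.card_erase_of_mem (Finset.mem_univ k), Finset.card_univ, Fintype.card_fin]
  have hi : (i : ℕ) ≤ c := by have := i.isLt; omega
  set p : R[X] := ∏ l : Fin n, (X + C (x l)) with hp
  set q : R[X] := ∏ l ∈ s, (X + C (-(x l))) with hq
  have hcard : (Finset.univ : Finset (Fin n)).card = n := by simp
  have hqdeg : q.natDegree < n := by
    have := natDegree_prod_X_add_C_le s (fun l => -(x l))
    rw [hs] at this
    rw [hq]; omega
  have hqc : ∀ j : ℕ, j ≤ c → q.coeff (c - j) = (-1)^j * ES s x j := by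
    intro j hj
    have h2 : q.coeff (s.card - j) = ES s (fun l => -(x l)) j :=
      coeff_prod_X_add_C s _ (by omega)
    rw [hs] at h2
    rw [h2, ES_neg]
  set N : ℕ := 2 * (c - (i:ℕ)) + 1 with hN
  have stepA : (p * q).coeff N
      = ∑ j : Fin n, EZ x (2 * ((i:ℕ) : ℤ) - ((j:ℕ) : ℤ)) * q.coeff (c - (j:ℕ)) := by
    conv_lhs => rw [q.as_sum_range' n hqdeg, Finset.mul_sum]
    rw [Polynomial.finset_sum_coeff]
    have hterm : ∀ d : ℕ, (p * (monomial d) (q.coeff d)).coeff N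
        = q.coeff d * (if d ≤ N then p.coeff (N - d) else 0) := by
      intro d
      have h1 : p * (monomial d) (q.coeff d) = C (q.coeff d) * (p * X ^ d) := by
        rw [← Polynomial.C_mul_X_pow_eq_monomial]; ring
      rw [h1, Polynomial.coeff_C_mul, Polynomial.coeff_mul_X_pow']
    rw [Finset.sum_congr rfl (fun d _ => hterm d)]
    rw [← Finset.sum_range_reflect]
    rw [Fin.sum_univ_eq_sum_range
      (fun j => EZ x (2 * ((i:ℕ) : ℤ) - ((j:ℕ) : ℤ)) * q.coeff (c - j)) n]
    refine Finset.sum_congr rfl fun j hj => ?_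
    rw [Finset.mem_range] at hj
    have hj' : j ≤ c := by omega
    have harg : n - 1 - j = c - j := by omega
    rw [harg, mul_comm]
    congr 1
    by_cases h0 : 0 ≤ 2 * ((i:ℕ):ℤ) - (j:ℤ)
    · by_cases h2 : 2 * ((i:ℕ):ℤ) - (j:ℤ) ≤ (n:ℤ)
      · set m : ℕ := (2 * ((i:ℕ):ℤ) - (j:ℤ)).toNat with hm
        have hm1 : (m : ℤ) = 2 * ((i:ℕ):ℤ) - (j:ℤ) := Int.toNat_of_nonneg h0
        have hmn : m ≤ n := by omega
        have hcnd : c - j ≤ N := by omega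
        rw [if_pos hcnd, EZ, if_pos ⟨h0, h2⟩]
        have hidx : N - (c - j) = (Finset.univ : Finset (Fin n)).card - m := by
          rw [hcard]; omega
        rw [hidx, coeff_prod_X_add_C Finset.univ x (by rw [hcard]; exact hmn)]
      · rw [if_neg (show ¬ (c - j ≤ N) by omega), EZ,
            if_neg (fun h => h2 h.2)]
    · rw [if_pos (show c - j ≤ N by omega), EZ,
          if_neg (fun h => h0 h.1)]
      apply coeff_prod_X_add_C_eq_zero
      rw [hcard]; omega
  have hpq : p * q = (X + C (x k)) * (Polynomial.expand R 2 (∏ l ∈ s, (X + C (-(x l ^ 2))))) := by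
    have h1 : p = (X + C (x k)) * ∏ l ∈ s, (X + C (x l)) := by
      rw [hp, ← Finset.mul_prod_erase Finset.univ _ (Finset.mem_univ k)]
    rw [h1, hq, mul_assoc, ← Finset.prod_mul_distrib, map_prod]
    congr 1
    refine Finset.prod_congr rfl fun l _ => ?_
    rw [map_add, Polynomial.expand_X, Polynomial.expand_C]
    rw [map_neg, map_neg, map_pow]
    ring
  have hC : (p * q).coeff N = (-1)^(i:ℕ) * ES s (fun l => x l ^ 2) (i:ℕ) := by
    set g : R[X] := ∏ l ∈ s, (X + C (-(x l ^ 2))) with hg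
    rw [hpq, add_mul, Polynomial.coeff_add]
    have hNodd : ¬ (2 ∣ N) := by omega
    have e1 : (X * Polynomial.expand R 2 g).coeff N = g.coeff (c - (i:ℕ)) := by
      rw [hN, Polynomial.coeff_X_mul, Polynomial.coeff_expand_mul' (by norm_num)]
    have e2 : (C (x k) * Polynomial.expand R 2 g).coeff N = 0 := by
      rw [Polynomial.coeff_C_mul, Polynomial.coeff_expand (by norm_num), if_neg hNodd, mul_zero]
    rw [e1, e2, add_zero]
    have h3 : g.coeff (s.card - (i:ℕ)) = ES s (fun l => -(x l ^ 2)) (i:ℕ) :=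
      coeff_prod_X_add_C s _ (by omega)
    rw [hs] at h3
    rw [h3]
    exact ES_neg s (fun l => x l ^ 2) (i:ℕ)
  calc ∑ j : Fin n, EZ x (2 * ((i:ℕ):ℤ) - ((j:ℕ):ℤ)) * ((-1) ^ (j:ℕ) * ES s x (j:ℕ))
      = ∑ j : Fin n, EZ x (2 * ((i:ℕ):ℤ) - ((j:ℕ):ℤ)) * q.coeff (c - (j:ℕ)) := by
        refine Finset.sum_congr rfl fun j _ => ?_
        rw [hqc (j:ℕ) (by have := j.isLt; omega)]
    _ = (p * q).coeff N := stepA.symm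
    _ = (-1)^(i:ℕ) * ES s (fun l => x l ^ 2) (i:ℕ) := hC

lemma ES_zero (s : Finset (Fin n)) (x : Fin n → R) : ES s x 0 = 1 := by simp [ES]

lemma lemA (y : Fin n → R) (k m : Fin n) :
    ∑ i : Fin n, ES (Finset.univ.erase k) y (i : ℕ) * ((-1) ^ (i : ℕ) * y m ^ (n - 1 - (i : ℕ)))
      = if k = m then ∏ l ∈ Finset.univ.erase k, (y k - y l) else 0 := by
  classical
  have hn : 0 < n := k.pos
  set c : ℕ := n - 1 with hc
  set s : Finset (Fin n) := Finset.univ.erase k with hsdef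
  have hs : s.card = c := by
    rw [hsdef, Finset.card_erase_of_mem (Finset.mem_univ k), Finset.card_univ, Fintype.card_fin]
  set q : R[X] := ∏ l ∈ s, (X + C (-(y l))) with hq
  have hqdeg : q.natDegree < n := by
    have := natDegree_prod_X_add_C_le s (fun l => -(y l))
    rw [hs] at this; rw [hq]; omega
  have hqc : ∀ j : ℕ, j ≤ c → q.coeff (c - j) = (-1) ^ j * ES s y j := by
    intro j hj
    have h2 : q.coeff (s.card - j) = ES s (fun l => -(y l)) j :=
      coeff_prod_X_add_C s _ (by omega)
    rw [hs] at h2; rw [h2, ES_neg]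
  have heval : Polynomial.eval (y m) q = ∏ l ∈ s, (y m - y l) := by
    rw [hq, Polynomial.eval_prod]
    exact Finset.prod_congr rfl fun l _ => by simp [sub_eq_add_neg]
  have hsum : Polynomial.eval (y m) q = ∑ i ∈ Finset.range n, q.coeff i * (y m) ^ i :=
    Polynomial.eval_eq_sum_range' hqdeg _
  have hrefl : ∑ i ∈ Finset.range n, q.coeff i * (y m) ^ i
      = ∑ i ∈ Finset.range n, q.coeff (n - 1 - i) * (y m) ^ (n - 1 - i) :=
    (Finset.sum_range_reflect (fun i => q.coeff i * (y m) ^ i) n).symm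
  have hmain : ∑ i : Fin n, ES s y (i : ℕ) * ((-1) ^ (i : ℕ) * y m ^ (n - 1 - (i : ℕ)))
      = ∏ l ∈ s, (y m - y l) := by
    rw [← heval, hsum, hrefl,
      Fin.sum_univ_eq_sum_range (fun i => ES s y i * ((-1) ^ i * y m ^ (n - 1 - i))) n]
    refine Finset.sum_congr rfl fun i hi => ?_
    rw [Finset.mem_range] at hi
    have h1 : n - 1 - i = c - i := by omega
    rw [h1, hqc i (by omega)]
    ring
  rw [hmain]
  by_cases hkm : k = m
  · rw [if_pos hkm, hkm]
  · rw [if_neg hkm]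
    refine Finset.prod_eq_zero (Finset.mem_erase.2 ⟨fun h => hkm h.symm, Finset.mem_univ m⟩) ?_
    ring

def matT (x : Fin n → R) : Matrix (Fin n) (Fin n) R :=
  Matrix.of fun i j => EZ x (2 * ((i : ℕ) : ℤ) - ((j : ℕ) : ℤ))

def matZ (y : Fin n → R) : Matrix (Fin n) (Fin n) R :=
  Matrix.of fun i k => ES (Finset.univ.erase k) y (i : ℕ)

def matS (y : Fin n → R) : Matrix (Fin n) (Fin n) R :=
  Matrix.of fun i m => (-1) ^ (i : ℕ) * y m ^ (n - 1 - (i : ℕ))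

lemma detZS (y : Fin n → R) :
    (matZ y).det * (matS y).det = ∏ k, ∏ l ∈ Finset.univ.erase k, (y k - y l) := by
  have hZS : (matZ y)ᵀ * matS y
      = Matrix.diagonal (fun k => ∏ l ∈ Finset.univ.erase k, (y k - y l)) := by
    ext k m
    rw [Matrix.mul_apply, Matrix.diagonal_apply]
    simp only [Matrix.transpose_apply, matZ, matS, Matrix.of_apply]
    exact lemA y k m
  have := congrArg Matrix.det hZS
  rw [Matrix.det_mul, Matrix.det_transpose, Matrix.det_diagonal] at this
  exact this

lemma detT_mul (x : Fin n → R) :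
    (matT x).det * (matZ x).det = (matZ (fun l => x l ^ 2)).det := by
  have hTZ : matT x * (Matrix.diagonal (fun i : Fin n => ((-1) ^ (i : ℕ) : R)) * matZ x)
      = Matrix.diagonal (fun i : Fin n => ((-1) ^ (i : ℕ) : R)) * matZ (fun l => x l ^ 2) := by
    ext i k
    rw [Matrix.mul_apply]
    simp only [Matrix.diagonal_mul, matT, matZ, Matrix.of_apply]
    exact lemB x i k
  have h := congrArg Matrix.det hTZ
  rw [Matrix.det_mul, Matrix.det_mul, Matrix.det_mul] at h
  set u : R := (Matrix.diagonal (fun i : Fin n => ((-1) ^ (i : ℕ) : R))).det with hu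
  have huu : u * u = 1 := by
    rw [hu, Matrix.det_diagonal, ← Finset.prod_mul_distrib]
    have h1 : ∀ i : Fin n, ((-1 : R) ^ (i : ℕ) * (-1) ^ (i : ℕ)) = 1 := by
      intro i; rw [← mul_pow]; norm_num
    rw [Finset.prod_congr rfl fun i _ => h1 i]
    exact Finset.prod_const_one
  calc (matT x).det * (matZ x).det
      = u * u * ((matT x).det * (matZ x).det) := by rw [huu, one_mul]
    _ = u * ((matT x).det * (u * (matZ x).det)) := by ring
    _ = u * (u * (matZ (fun l => x l ^ 2)).det) := by rw [h]
    _ = u * u * (matZ (fun l => x l ^ 2)).det := by ring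
    _ = (matZ (fun l => x l ^ 2)).det := by rw [huu, one_mul]

lemma detS (y : Fin n → R) :
    (matS y).det = ((Matrix.diagonal (fun i : Fin n => ((-1) ^ (i : ℕ) : R))).det
        * (((Equiv.Perm.sign (Fin.revPerm : Equiv.Perm (Fin n))) : ℤ) : R))
      * ∏ i : Fin n, ∏ j ∈ Finset.Ioi i, (y j - y i) := by
  have hS : matS y = Matrix.diagonal (fun i : Fin n => ((-1) ^ (i : ℕ) : R)) *
      ((Matrix.vandermonde y)ᵀ.submatrix (Fin.revPerm : Equiv.Perm (Fin n)) id) := by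
    ext i m
    simp only [matS, Matrix.diagonal_mul, Matrix.submatrix_apply, Matrix.transpose_apply,
      Matrix.vandermonde, Fin.revPerm_apply, Fin.val_rev, Matrix.of_apply, id_eq]
    have harg : n - 1 - (i : ℕ) = n - ((i : ℕ) + 1) := by omega
    rw [harg]
  rw [hS, Matrix.det_mul, Matrix.det_permute, Matrix.det_transpose, Matrix.det_vandermonde]
  ring

lemma prod_Ioi_eq_prod_Iio {M : Type*} [CommMonoid M] (f : Fin n → Fin n → M) :
    ∏ i, ∏ j ∈ Finset.Ioi i, f i j = ∏ j, ∏ i ∈ Finset.Iio j, f i j := by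
  rw [Finset.prod_sigma', Finset.prod_sigma']
  refine Finset.prod_nbij' (fun p => ⟨p.2, p.1⟩) (fun p => ⟨p.2, p.1⟩) ?_ ?_ ?_ ?_ ?_ <;>
    simp [Finset.mem_Ioi, Finset.mem_Iio]

lemma prod_prod_mul {M : Type*} [CommMonoid M] (f g : Fin n → Fin n → M) :
    (∏ i, ∏ j ∈ Finset.Ioi i, f i j) * (∏ i, ∏ j ∈ Finset.Ioi i, g i j)
      = ∏ i, ∏ j ∈ Finset.Ioi i, (f i j * g i j) := by
  rw [← Finset.prod_mul_distrib]
  exact Finset.prod_congr rfl fun i _ => (Finset.prod_mul_distrib).symm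

lemma D_form (y : Fin n → R) :
    ∏ k, ∏ l ∈ Finset.univ.erase k, (y k - y l)
      = ∏ i, ∏ j ∈ Finset.Ioi i, ((y i - y j) * (y j - y i)) := by
  have h := Finset.prod_prod_Ioi_mul_eq_prod_prod_off_diag (fun a b : Fin n => y b - y a)
  rw [h]
  refine Finset.prod_congr rfl fun k _ => Finset.prod_congr ?_ fun l _ => rfl
  ext l
  simp

lemma ES_map {S : Type*} [CommRing S] (f : R →+* S) (s : Finset (Fin n)) (x : Fin n → R)
    (k : ℕ) : f (ES s x k) = ES s (fun l => f (x l)) k := by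
  unfold ES
  rw [map_sum]
  exact Finset.sum_congr rfl fun t _ => by rw [map_prod]

lemma EZ_map {S : Type*} [CommRing S] (f : R →+* S) (x : Fin n → R) (m : ℤ) :
    f (EZ x m) = EZ (fun l => f (x l)) m := by
  unfold EZ
  split_ifs with h
  · exact ES_map f _ x m.toNat
  · exact map_zero f


end Generic

section Master
variable {n : ℕ}

local notation "A" => MvPolynomial (Fin n) ℤ

lemma master :
    (matT (fun i => (MvPolynomial.X i : A))).det
      = ∏ j : Fin n, ∏ i ∈ Finset.Iio j, (MvPolynomial.X i + MvPolynomial.X j) := by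
  classical
  set x : Fin n → A := fun i => MvPolynomial.X i with hx
  set x2 : Fin n → A := fun l => x l ^ 2 with hx2
  set e : A := ((Matrix.diagonal (fun i : Fin n => ((-1) ^ (i : ℕ) : A))).det
    * (((Equiv.Perm.sign (Fin.revPerm : Equiv.Perm (Fin n))) : ℤ) : A)) with he
  have hee : e * e = 1 := by
    rw [he]
    have h1 : (Matrix.diagonal (fun i : Fin n => ((-1) ^ (i : ℕ) : A))).det
        * (Matrix.diagonal (fun i : Fin n => ((-1) ^ (i : ℕ) : A))).det = 1 := by
      rw [Matrix.det_diagonal, ← Finset.prod_mul_distrib]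
      have h1 : ∀ i : Fin n, ((-1 : A) ^ (i : ℕ) * (-1) ^ (i : ℕ)) = 1 := by
        intro i; rw [← mul_pow]; norm_num
      rw [Finset.prod_congr rfl fun i _ => h1 i]
      exact Finset.prod_const_one
    have h2 : (((Equiv.Perm.sign (Fin.revPerm : Equiv.Perm (Fin n))) : ℤ) : A)
        * (((Equiv.Perm.sign (Fin.revPerm : Equiv.Perm (Fin n))) : ℤ) : A) = 1 := by
      have := Int.units_mul_self (Equiv.Perm.sign (Fin.revPerm : Equiv.Perm (Fin n)))
      rw [← Int.cast_mul (α := A), ← Units.val_mul, this]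
      norm_num
    calc _ = ((Matrix.diagonal (fun i : Fin n => ((-1) ^ (i : ℕ) : A))).det
          * (Matrix.diagonal (fun i : Fin n => ((-1) ^ (i : ℕ) : A))).det)
          * ((((Equiv.Perm.sign (Fin.revPerm : Equiv.Perm (Fin n))) : ℤ) : A)
          * (((Equiv.Perm.sign (Fin.revPerm : Equiv.Perm (Fin n))) : ℤ) : A)) := by ring
      _ = 1 := by rw [h1, h2, one_mul]
  set P : A := ∏ j : Fin n, ∏ i ∈ Finset.Iio j, (MvPolynomial.X i + MvPolynomial.X j) with hP
  set Vx : A := ∏ i : Fin n, ∏ j ∈ Finset.Ioi i, (x j - x i) with hVx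
  set Vx2 : A := ∏ i : Fin n, ∏ j ∈ Finset.Ioi i, (x2 j - x2 i) with hVx2
  set Dx : A := ∏ k, ∏ l ∈ Finset.univ.erase k, (x k - x l) with hDx
  set Dx2 : A := ∏ k, ∏ l ∈ Finset.univ.erase k, (x2 k - x2 l) with hDx2
  have h1 : (matT x).det * (matZ x).det = (matZ x2).det := detT_mul x
  have h2 : (matZ x).det * (matS x).det = Dx := detZS x
  have h3 : (matZ x2).det * (matS x2).det = Dx2 := detZS x2
  have h4 : (matS x).det = e * Vx := detS x
  have h5 : (matS x2).det = e * Vx2 := detS x2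
  have hPIoi : P = ∏ i : Fin n, ∏ j ∈ Finset.Ioi i, (x i + x j) :=
    (prod_Ioi_eq_prod_Iio (fun i j => x i + x j)).symm
  have E3 : Dx2 * Vx = P * (Dx * Vx2) := by
    rw [hDx, hDx2, D_form, D_form, hPIoi, hVx, hVx2]
    rw [prod_prod_mul, prod_prod_mul, prod_prod_mul]
    refine Finset.prod_congr rfl fun i _ => Finset.prod_congr rfl fun j _ => ?_
    rw [hx2]
    ring
  have key : (matT x).det * (Dx * (e * Vx2)) = P * (Dx * (e * Vx2)) := by
    calc (matT x).det * (Dx * (e * Vx2))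
        = (matT x).det * (((matZ x).det * (matS x).det) * (e * Vx2)) := by rw [h2]
      _ = ((matT x).det * (matZ x).det) * (matS x).det * (e * Vx2) := by ring
      _ = (matZ x2).det * (matS x).det * (e * Vx2) := by rw [h1]
      _ = (matZ x2).det * (e * Vx) * (e * Vx2) := by rw [h4]
      _ = ((matZ x2).det * (e * Vx2)) * (e * Vx) := by ring
      _ = ((matZ x2).det * (matS x2).det) * (e * Vx) := by rw [h5]
      _ = Dx2 * (e * Vx) := by rw [h3]
      _ = e * (Dx2 * Vx) := by ring
      _ = e * (P * (Dx * Vx2)) := by rw [E3]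
      _ = P * (Dx * (e * Vx2)) := by ring
  have hne : Dx * (e * Vx2) ≠ 0 := by
    have hdom : ∀ (k l : Fin n), k ≠ l → (x k - x l) ≠ 0 := by
      intro k l hkl h
      have := congrArg (MvPolynomial.eval (Pi.single k (1 : ℤ))) h
      simp [hx, Pi.single_eq_of_ne (Ne.symm hkl)] at this
    have hDxne : Dx ≠ 0 := by
      rw [hDx]
      refine Finset.prod_ne_zero_iff.2 fun k _ => Finset.prod_ne_zero_iff.2 fun l hl => ?_
      exact hdom k l (fun h => (Finset.mem_erase.1 hl).1 h.symm)
    have hene : e ≠ 0 := by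
      intro h
      rw [h, zero_mul] at hee
      exact zero_ne_one hee
    have hVx2ne : Vx2 ≠ 0 := by
      rw [hVx2]
      refine Finset.prod_ne_zero_iff.2 fun i _ => Finset.prod_ne_zero_iff.2 fun j hj => ?_
      have hij : i ≠ j := ne_of_lt (Finset.mem_Ioi.1 hj)
      intro h
      have := congrArg (MvPolynomial.eval (Pi.single j (1 : ℤ))) h
      simp [hx2, hx, Pi.single_eq_of_ne hij] at this
    exact mul_ne_zero hDxne (mul_ne_zero hene hVx2ne)
  exact mul_right_cancel₀ hne key

end Master

/-- The `k`-th minor-sum of an `n × n` complex matrix `M`: the sum of its `k × k`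
principal minors, i.e. `(-1)^k` times the coefficient of `X^(n-k)` in the
characteristic polynomial `det (X•I - M)`; extended to integer indices by `0`
outside `0 ≤ k ≤ n` (with `J 0 = 1` since the characteristic polynomial is monic). -/
noncomputable def minorSumC (n : ℕ) (M : Matrix (Fin n) (Fin n) ℂ) (k : ℤ) : ℂ :=
  if 0 ≤ k ∧ k ≤ (n : ℤ) then (-1) ^ k.toNat * (Matrix.charpoly M).coeff (n - k.toNat)
  else 0

lemma minorSum_eq (n : ℕ) (M : Matrix (Fin n) (Fin n) ℂ) (lam : Fin n → ℂ)
    (hlam : Matrix.charpoly M = ∏ i : Fin n, (Polynomial.X - Polynomial.C (lam i))) (k : ℤ) :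
    minorSumC n M k = EZ lam k := by
  unfold minorSumC EZ
  split_ifs with h
  · obtain ⟨h0, h1⟩ := h
    have ht : k.toNat ≤ n := by omega
    rw [hlam]
    have hprod : (∏ i : Fin n, (Polynomial.X - Polynomial.C (lam i)))
        = ∏ i : Fin n, (Polynomial.X + Polynomial.C (-(lam i))) :=
      Finset.prod_congr rfl fun i _ => by rw [map_neg, sub_eq_add_neg]
    have hcard : (Finset.univ : Finset (Fin n)).card = n := by simp
    have hco := coeff_prod_X_add_C (Finset.univ) (fun i => -(lam i)) (k := k.toNat)
      (by simpa [hcard] using ht)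
    rw [hcard] at hco
    rw [hprod, hco, ES_neg, ← mul_assoc, ← mul_pow]
    norm_num
  · rfl

theorem det_secondAdditiveCompound_eq_det_minorSum_matrix
    (n : ℕ) (hn : 2 ≤ n) (M : Matrix (Fin n) (Fin n) ℂ) (lam : Fin n → ℂ)
    (hlam : Matrix.charpoly M = ∏ i : Fin n, (Polynomial.X - Polynomial.C (lam i))) :
    (∏ j : Fin n, ∏ i ∈ Finset.Iio j, (lam i + lam j)) =
      Matrix.det (Matrix.of fun i j : Fin (n - 1) =>
        minorSumC n M (2 * ((i : ℕ) : ℤ) + 2 - (((j : ℕ) : ℤ) + 1))) := by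
  obtain ⟨m, rfl⟩ : ∃ m, n = m + 1 := ⟨n - 1, by omega⟩
  show (∏ j : Fin (m+1), ∏ i ∈ Finset.Iio j, (lam i + lam j)) =
      Matrix.det (Matrix.of fun i j : Fin m =>
        minorSumC (m+1) M (2 * ((i : ℕ) : ℤ) + 2 - (((j : ℕ) : ℤ) + 1)))
  set φ : MvPolynomial (Fin (m+1)) ℤ →+* ℂ :=
    (MvPolynomial.eval₂Hom (Int.castRingHom ℂ) lam : MvPolynomial (Fin (m+1)) ℤ →+* ℂ) with hphi
  have hφ : ∀ i, φ (MvPolynomial.X i) = lam i := fun i => MvPolynomial.eval₂Hom_X' _ _ _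
  have hφP : φ (∏ j : Fin (m+1), ∏ i ∈ Finset.Iio j, (MvPolynomial.X i + MvPolynomial.X j))
      = ∏ j : Fin (m+1), ∏ i ∈ Finset.Iio j, (lam i + lam j) := by
    rw [map_prod]
    refine Finset.prod_congr rfl fun j _ => ?_
    rw [map_prod]
    refine Finset.prod_congr rfl fun i _ => ?_
    rw [map_add, hφ, hφ]
  have hdet : φ ((matT (fun i => (MvPolynomial.X i : MvPolynomial (Fin (m+1)) ℤ))).det)
      = (matT lam).det := by
    rw [RingHom.map_det]
    have hmm : (matT (fun i => (MvPolynomial.X i : MvPolynomial (Fin (m+1)) ℤ))).map φ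
        = matT lam := by
      ext i j
      simp only [Matrix.map_apply, matT, Matrix.of_apply]
      rw [EZ_map]
      congr 1
      funext l
      exact hφ l
    rw [RingHom.mapMatrix_apply, hmm]
  have hL : (∏ j : Fin (m+1), ∏ i ∈ Finset.Iio j, (lam i + lam j)) = (matT lam).det := by
    rw [← hφP, ← master, hdet]
  rw [hL]
  -- expand along the first row
  rw [Matrix.det_succ_row_zero]
  rw [Finset.sum_eq_single 0]
  · have h00 : matT lam 0 (0 : Fin (m+1)) = 1 := by
      simp only [matT, Matrix.of_apply, Fin.val_zero, Nat.cast_zero, mul_zero, sub_zero]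
      rw [EZ, if_pos ⟨le_refl 0, by positivity⟩, Int.toNat_zero, ES_zero]
    rw [h00]
    simp only [Fin.val_zero, pow_zero, one_mul]
    congr 1
    ext i j
    simp only [Matrix.submatrix_apply, Fin.zero_succAbove, matT, Matrix.of_apply]
    rw [minorSum_eq (m+1) M lam hlam]
    congr 1
  · intro j _ hj0
    have hjne : (j : ℕ) ≠ 0 := fun h => hj0 (Fin.ext h)
    have hz : matT lam 0 j = 0 := by
      simp only [matT, Matrix.of_apply]
      rw [EZ, if_neg]
      intro h
      have := h.1
      simp only [Fin.val_zero] at this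
      omega
    rw [hz, mul_zero, zero_mul]
  · intro h
    exact absurd (Finset.mem_univ 0) h
end

section
/- Let n ≥ 2 and let q_n be the unique polynomial in n variables over ℂ satisfying q_n(e_1(λ), e_2(λ), …, e_n(λ)) = ∏_{1 ≤ i < j ≤ n}(λ_i + λ_j) for all λ = (λ_1,…,λ_n) ∈ ℂ^n, where e_k is the k-th elementary symmetric polynomial. Then q_n has total degree n − 1 and q_n is irreducible as an element of ℂ[J_1,…,J_n]. -/
/-- The `k`-th elementary symmetric function of `lam : Fin n → ℂ`. -/
noncomputable def esym (n : ℕ) (lam : Fin n → ℂ) (k : ℕ) : ℂ :=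
  ∑ s ∈ Finset.powersetCard k (Finset.univ : Finset (Fin n)), ∏ i ∈ s, lam i

namespace QnAux
open MvPolynomial AddMonoidAlgebra Finset
variable {n : ℕ}

lemma toLex_single_lt {i j : Fin n} (h : i < j) :
    toLex (Finsupp.single j (1:ℕ)) < toLex (Finsupp.single i 1) := by
  rw [Finsupp.Lex.lt_iff]
  refine ⟨i, fun k hk => ?_, ?_⟩
  · simp [Finsupp.single_apply, (hk.trans h).ne', hk.ne']
  · simp [Finsupp.single_apply, h.ne']

lemma supDegree_L {i j : Fin n} (h : i < j) :
    supDegree toLex (X i + X j : MvPolynomial (Fin n) ℂ) = toLex (Finsupp.single i 1) := by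
  have hx : (X i : MvPolynomial (Fin n) ℂ) = AddMonoidAlgebra.single (Finsupp.single i 1) 1 := rfl
  have hy : (X j : MvPolynomial (Fin n) ℂ) = AddMonoidAlgebra.single (Finsupp.single j 1) 1 := rfl
  rw [hx, hy, supDegree_add_eq_left, supDegree_single_ne_zero _ one_ne_zero]
  rw [supDegree_single_ne_zero _ one_ne_zero, supDegree_single_ne_zero _ one_ne_zero]
  exact toLex_single_lt h

lemma monic_L {i j : Fin n} (h : i < j) :
    Monic toLex (X i + X j : MvPolynomial (Fin n) ℂ) := by
  have hx : (X i : MvPolynomial (Fin n) ℂ) = AddMonoidAlgebra.single (Finsupp.single i 1) 1 := rfl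
  have hy : (X j : MvPolynomial (Fin n) ℂ) = AddMonoidAlgebra.single (Finsupp.single j 1) 1 := rfl
  rw [Monic, hx, hy, leadingCoeff_add_eq_left, leadingCoeff_single toLex.injective]
  rw [supDegree_single_ne_zero _ one_ne_zero, supDegree_single_ne_zero _ one_ne_zero]
  exact toLex_single_lt h

lemma L_ne_zero {i j : Fin n} (h : i < j) : (X i + X j : MvPolynomial (Fin n) ℂ) ≠ 0 :=
  (monic_L h).ne_zero

lemma eq_zero_of_toLex_le {m : Fin n →₀ ℕ} (h : toLex m ≤ toLex 0) : m = 0 := by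
  rcases h.eq_or_lt with he | hlt
  · exact toLex.injective he
  · rw [Finsupp.Lex.lt_iff] at hlt
    obtain ⟨i, -, hi⟩ := hlt
    simp at hi

lemma eq_C_of_supDegree_le {p : MvPolynomial (Fin n) ℂ}
    (h : supDegree toLex p ≤ toLex 0) : p = C (coeff 0 p) := by
  ext m
  rcases eq_or_ne m 0 with rfl | hm
  · simp
  · rw [coeff_C, if_neg (Ne.symm hm)]
    by_contra hc
    have hmem : m ∈ p.support := mem_support_iff.2 hc
    have : toLex m ≤ supDegree toLex p := Finset.le_sup hmem
    exact hm (eq_zero_of_toLex_le (this.trans h))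

lemma isUnit_of_supDegree_le {p : MvPolynomial (Fin n) ℂ} (hp : p ≠ 0)
    (h : supDegree toLex p ≤ toLex 0) : IsUnit p := by
  have he := eq_C_of_supDegree_le h
  have hc : coeff 0 p ≠ 0 := fun h0 => hp (by rw [he, h0, map_zero])
  exact he ▸ (isUnit_iff_ne_zero.2 hc).map MvPolynomial.C

lemma supDegree_mul' {p q : MvPolynomial (Fin n) ℂ} (hp : p ≠ 0) (hq : q ≠ 0) :
    supDegree toLex (p * q) = supDegree toLex p + supDegree toLex q := by
  refine supDegree_mul toLex.injective (fun _ _ => toLex_add _ _) ?_ hp hq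
  exact mul_ne_zero ((leadingCoeff_ne_zero toLex.injective).2 hp)
    ((leadingCoeff_ne_zero toLex.injective).2 hq)

lemma supDegree_one : supDegree toLex (1 : MvPolynomial (Fin n) ℂ) = toLex 0 := by
  have h1 : (1 : MvPolynomial (Fin n) ℂ) = AddMonoidAlgebra.single 0 1 := rfl
  rw [h1, supDegree_single_ne_zero _ one_ne_zero]

lemma add_eq_single_cases {α β : Fin n →₀ ℕ} {i : Fin n}
    (h : α + β = Finsupp.single i 1) : α = 0 ∨ β = 0 := by
  have hap : ∀ k, α k + β k = Finsupp.single i 1 k := fun k => by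
    rw [← Finsupp.add_apply, h]
  have hi := hap i
  rw [Finsupp.single_eq_same] at hi
  rcases Nat.add_eq_one_iff.1 hi with ⟨h1, _⟩ | ⟨_, h2⟩
  · left; ext k
    show α k = 0
    rcases eq_or_ne k i with rfl | hk
    · exact h1
    · have := hap k
      rw [Finsupp.single_eq_of_ne' (Ne.symm hk)] at this
      omega
  · right; ext k
    show β k = 0
    rcases eq_or_ne k i with rfl | hk
    · exact h2
    · have := hap k
      rw [Finsupp.single_eq_of_ne' (Ne.symm hk)] at this
      omega

lemma supDegree_eq_of_ofLex_eq_zero {p : MvPolynomial (Fin n) ℂ}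
    (h : ofLex (supDegree toLex p) = 0) : supDegree toLex p = toLex 0 := by
  rw [← h]; rfl

lemma ofLex_add' (a b : Lex (Fin n →₀ ℕ)) : ofLex (a + b) = ofLex a + ofLex b := rfl

lemma irreducible_L {i j : Fin n} (h : i < j) :
    Irreducible (X i + X j : MvPolynomial (Fin n) ℂ) := by
  constructor
  · rintro ⟨u, hu⟩
    have hv : (X i + X j) * (↑u⁻¹ : MvPolynomial (Fin n) ℂ) = 1 := by
      rw [← hu]; exact u.mul_inv
    have hvne : (↑u⁻¹ : MvPolynomial (Fin n) ℂ) ≠ 0 := fun h0 => by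
      simp [h0] at hv
    have hd := supDegree_mul' (L_ne_zero h) hvne
    rw [hv, supDegree_one, supDegree_L h, ofLex_inj.symm, ofLex_add', ofLex_toLex,
      ofLex_toLex] at hd
    have := congrArg (fun f : Fin n →₀ ℕ => f i) hd
    simp [Finsupp.single_apply] at this
    omega
  · intro a b hab
    have ha : a ≠ 0 := fun h0 => L_ne_zero h (by rw [hab, h0, zero_mul])
    have hb : b ≠ 0 := fun h0 => L_ne_zero h (by rw [hab, h0, mul_zero])
    have hd := supDegree_mul' ha hb
    rw [← hab, supDegree_L h] at hd
    have hαβ : ofLex (supDegree toLex a) + ofLex (supDegree toLex b) =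
        Finsupp.single i 1 := (congrArg ofLex hd).symm
    rcases add_eq_single_cases hαβ with h0 | h0
    · exact Or.inl (isUnit_of_supDegree_le ha (le_of_eq (by rw [← ofLex_inj, h0, ofLex_toLex])))
    · exact Or.inr (isUnit_of_supDegree_le hb (le_of_eq (by rw [← ofLex_inj, h0, ofLex_toLex])))

lemma not_dvd_L {i j k l : Fin n} (hij : i < j) (hkl : k < l)
    (hne : (i, j) ≠ (k, l)) : ¬ ((X i + X j : MvPolynomial (Fin n) ℂ) ∣ (X k + X l)) := by
  rintro ⟨b, hb⟩
  have hbne : b ≠ 0 := fun h0 => L_ne_zero hkl (by rw [hb, h0, mul_zero])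
  have hd := supDegree_mul' (L_ne_zero hij) hbne
  rw [← hb, supDegree_L hkl, supDegree_L hij] at hd
  have hαβ : Finsupp.single i 1 + ofLex (supDegree toLex b) = Finsupp.single k (1:ℕ) :=
    (congrArg ofLex hd).symm
  -- first, i = k
  have hik : i = k := by
    by_contra hik
    have := congrArg (fun f : Fin n →₀ ℕ => f i) hαβ
    simp [Finsupp.single_apply, Ne.symm hik] at this
  subst hik
  -- then ofLex supDegree b = 0
  have hβ : ofLex (supDegree toLex b) = 0 := by
    ext m
    have := congrArg (fun f : Fin n →₀ ℕ => f m) hαβ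
    simp only [Finsupp.add_apply] at this
    show (ofLex (supDegree toLex b)) m = 0
    omega
  have hbC : b = C (coeff 0 b) :=
    eq_C_of_supDegree_le (le_of_eq (by rw [← ofLex_inj, hβ, ofLex_toLex]))
  have hjl : j ≠ l := fun hjl => hne (by rw [hjl])
  have h1 : ¬ (Finsupp.single i (1:ℕ) = Finsupp.single j 1) := by
    rw [Finsupp.single_left_inj (one_ne_zero (α := ℕ))]; exact ne_of_lt hij
  have h2 : ¬ (Finsupp.single l (1:ℕ) = Finsupp.single j 1) := by
    rw [Finsupp.single_left_inj (one_ne_zero (α := ℕ))]; exact Ne.symm hjl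
  have hcoeff := congrArg (MvPolynomial.coeff (Finsupp.single j 1)) hb
  rw [hbC, mul_comm, coeff_C_mul] at hcoeff
  simp only [MvPolynomial.coeff_add, coeff_X', if_neg h1, if_neg h2] at hcoeff
  rw [hbC] at hbne
  refine hbne ?_
  have hc0 : coeff 0 b = 0 := by simpa using hcoeff.symm
  rw [hc0, map_zero]

lemma prod_monic_supDegree {ι : Type*} (s : Finset ι) (f : ι → MvPolynomial (Fin n) ℂ)
    (h : ∀ i ∈ s, Monic toLex (f i)) :
    Monic toLex (∏ i ∈ s, f i) ∧
      ofLex (supDegree toLex (∏ i ∈ s, f i)) = ∑ i ∈ s, ofLex (supDegree toLex (f i)) := by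
  classical
  induction s using Finset.cons_induction with
  | empty =>
    refine ⟨monic_one toLex.injective, ?_⟩
    rw [Finset.prod_empty, Finset.sum_empty]
    have h1 : (1 : MvPolynomial (Fin n) ℂ) = AddMonoidAlgebra.single 0 1 := rfl
    rw [h1, supDegree_single_ne_zero _ one_ne_zero, ofLex_toLex]
  | cons a s ha ih =>
    obtain ⟨ihm, ihd⟩ := ih (fun i hi => h i (Finset.mem_cons_of_mem hi))
    have hma := h a (Finset.mem_cons_self a s)
    rw [Finset.prod_cons, Finset.sum_cons]
    constructor
    · exact hma.mul toLex.injective (fun _ _ => toLex_add _ _) ihm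
    · rw [hma.supDegree_mul_of_ne_zero_right toLex.injective (fun _ _ => toLex_add _ _)
        ihm.ne_zero]
      rw [← ihd]; rfl

noncomputable def P (n : ℕ) : MvPolynomial (Fin n) ℂ :=
  ∏ j : Fin n, ∏ i ∈ Finset.Iio j, (X i + X j)

lemma inner_monic (j : Fin n) :
    Monic toLex (∏ i ∈ Finset.Iio j, (X i + X j : MvPolynomial (Fin n) ℂ)) ∧
      ofLex (supDegree toLex (∏ i ∈ Finset.Iio j, (X i + X j : MvPolynomial (Fin n) ℂ))) =
        ∑ i ∈ Finset.Iio j, Finsupp.single i 1 := by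
  obtain ⟨hm, hd⟩ := prod_monic_supDegree (Finset.Iio j)
    (fun i => (X i + X j : MvPolynomial (Fin n) ℂ))
    (fun i hi => monic_L (Finset.mem_Iio.1 hi))
  refine ⟨hm, hd.trans (Finset.sum_congr rfl fun i hi => ?_)⟩
  rw [supDegree_L (Finset.mem_Iio.1 hi), ofLex_toLex]

lemma P_monic : Monic toLex (P n) ∧
    ofLex (supDegree toLex (P n)) = ∑ j : Fin n, ∑ i ∈ Finset.Iio j, Finsupp.single i 1 := by
  obtain ⟨hm, hd⟩ := prod_monic_supDegree Finset.univ
    (fun j : Fin n => ∏ i ∈ Finset.Iio j, (X i + X j : MvPolynomial (Fin n) ℂ))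
    (fun j _ => (inner_monic j).1)
  exact ⟨hm, hd.trans (Finset.sum_congr rfl fun j _ => (inner_monic j).2)⟩

lemma P_ne_zero : (P n) ≠ 0 := P_monic.1.ne_zero

lemma staircase_zero [NeZero n] :
    (∑ j : Fin n, ∑ i ∈ Finset.Iio j, Finsupp.single i (1:ℕ)) 0 = n - 1 := by
  classical
  rw [Finset.sum_apply']
  have h1 : ∀ j : Fin n, (∑ i ∈ Finset.Iio j, Finsupp.single i (1:ℕ)) 0
      = if (0 : Fin n) < j then 1 else 0 := by
    intro j
    rw [Finset.sum_apply']
    rw [show (∑ i ∈ Finset.Iio j, Finsupp.single i (1:ℕ) 0)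
        = ∑ i ∈ Finset.Iio j, if i = 0 then 1 else 0 from
      Finset.sum_congr rfl fun i _ => by rw [Finsupp.single_apply]]
    rw [Finset.sum_ite_eq' (Finset.Iio j) 0 (fun _ => 1)]
    simp [Finset.mem_Iio]
  rw [Finset.sum_congr rfl fun j _ => h1 j, Finset.sum_boole]
  have h2 : Finset.filter (fun j : Fin n => 0 < j) Finset.univ = Finset.univ.erase 0 := by
    ext j
    simp only [Finset.mem_filter, Finset.mem_univ, true_and, Finset.mem_erase, and_true]
    exact Fin.pos_iff_ne_zero' j
  rw [h2, Finset.card_erase_of_mem (Finset.mem_univ _), Finset.card_univ, Fintype.card_fin]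
  simp

lemma sq_not_dvd {i j : Fin n} (h : i < j) :
    ¬ ((X i + X j) * (X i + X j) ∣ (P n)) := by
  classical
  intro hdvd
  have hmem : i ∈ Finset.Iio j := Finset.mem_Iio.2 h
  have hsplit : P n = (X i + X j) *
      ((∏ i' ∈ (Finset.Iio j).erase i, (X i' + X j)) *
        ∏ j' ∈ Finset.univ.erase j, ∏ i' ∈ Finset.Iio j', (X i' + X j')) := by
    rw [P, ← Finset.mul_prod_erase Finset.univ _ (Finset.mem_univ j),
      ← Finset.mul_prod_erase (Finset.Iio j) _ hmem, mul_assoc]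
  rw [hsplit] at hdvd
  have hL := (mul_dvd_mul_iff_left (L_ne_zero h)).1 hdvd
  have hprime : Prime (X i + X j : MvPolynomial (Fin n) ℂ) :=
    UniqueFactorizationMonoid.irreducible_iff_prime.1 (irreducible_L h)
  rcases hprime.2.2 _ _ hL with hc | hc
  · obtain ⟨i', hi', hdvd'⟩ := hprime.exists_mem_finset_dvd hc
    have hi'j : i' < j := Finset.mem_Iio.1 (Finset.mem_of_mem_erase hi')
    exact not_dvd_L h hi'j
      (fun he => (Finset.ne_of_mem_erase hi') (by injection he with h1 h2; exact h1.symm)) hdvd'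
  · obtain ⟨j', hj', hdvd'⟩ := hprime.exists_mem_finset_dvd hc
    obtain ⟨i', hi', hdvd''⟩ := hprime.exists_mem_finset_dvd hdvd'
    have hi'j' : i' < j' := Finset.mem_Iio.1 hi'
    refine not_dvd_L h hi'j' (fun he => (Finset.ne_of_mem_erase hj') ?_) hdvd''
    injection he with h1 h2; exact h2.symm

lemma L_dvd_of_symm {F : MvPolynomial (Fin n) ℂ} (hF : F.IsSymmetric)
    {i0 j0 i j : Fin n} (h0 : i0 < j0) (h : i < j)
    (hdvd : (X i0 + X j0) ∣ F) : (X i + X j) ∣ F := by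
  classical
  set τ := Equiv.swap i0 i
  set j' := τ j0
  have hj'i : j' ≠ i := by
    intro he
    have : j0 = τ i := by
      rw [← he]; simp [j', τ]
    rw [Equiv.swap_apply_right] at this
    exact (ne_of_gt h0) this
  set g := τ.trans (Equiv.swap j' j)
  have hgi : g i0 = i := by
    simp only [g, Equiv.trans_apply]
    rw [Equiv.swap_apply_left]
    exact Equiv.swap_apply_of_ne_of_ne hj'i.symm (ne_of_lt h)
  have hgj : g j0 = j := by
    simp only [g, Equiv.trans_apply]
    exact Equiv.swap_apply_left j' j
  have hr : rename g (X i0 + X j0 : MvPolynomial (Fin n) ℂ) = X i + X j := by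
    rw [map_add, rename_X, rename_X, hgi, hgj]
  calc (X i + X j : MvPolynomial (Fin n) ℂ) = rename g (X i0 + X j0) := hr.symm
    _ ∣ rename g F := map_dvd _ hdvd
    _ = F := hF g

lemma image_eq_P (q : MvPolynomial (Fin n) ℂ)
    (hq : ∀ lam : Fin n → ℂ,
      MvPolynomial.eval (fun i : Fin n => esym n lam ((i : ℕ) + 1)) q =
        ∏ j : Fin n, ∏ i ∈ Finset.Iio j, (lam i + lam j)) :
    ((esymmAlgHom (Fin n) ℂ n q : MvPolynomial (Fin n) ℂ)) = P n := by
  apply MvPolynomial.funext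
  intro x
  rw [esymmAlgHom_apply, aeval_def, eval_eval₂]
  have h1 : (eval x).comp (algebraMap ℂ (MvPolynomial (Fin n) ℂ)) = RingHom.id ℂ :=
    RingHom.ext fun r => by simp [algebraMap_eq]
  rw [h1, eval₂_id]
  have h2 : (fun s : Fin n => eval x (esymm (Fin n) ℂ ((s:ℕ) + 1)))
      = fun s : Fin n => esym n x ((s:ℕ) + 1) := by
    funext s
    rw [esymm, map_sum, esym]
    exact Finset.sum_congr rfl fun t _ => by rw [map_prod]; simp
  rw [h2, hq x, P, map_prod]
  exact (Finset.prod_congr rfl fun j _ => by rw [map_prod]; simp).symm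

lemma lex_le_apply_zero [NeZero n] {x y : Fin n →₀ ℕ} (h : toLex x ≤ toLex y) :
    x 0 ≤ y 0 := by
  rcases h.eq_or_lt with he | hlt
  · rw [toLex.injective he]
  · rw [Finsupp.Lex.lt_iff] at hlt
    obtain ⟨i, hj, hi⟩ := hlt
    rcases eq_or_ne i 0 with rfl | hi0
    · exact le_of_lt hi
    · exact le_of_eq (hj 0 ((Fin.pos_iff_ne_zero' i).2 hi0))

lemma accumulate_zero_apply [NeZero n] (t : Fin n →₀ ℕ) :
    Fin.accumulate n n (⇑t) 0 = t.sum (fun _ e => e) := by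
  rw [Fin.accumulate_apply]
  rw [Finset.filter_true_of_mem (fun i _ => by simp [Fin.val_zero n])]
  rw [Finsupp.sum_fintype _ _ (fun _ => rfl)]

lemma totalDegree_of_image [NeZero n] (q : MvPolynomial (Fin n) ℂ) (hq0 : q ≠ 0) :
    (ofLex (supDegree toLex ((esymmAlgHom (Fin n) ℂ n q : MvPolynomial (Fin n) ℂ)))) 0
      = q.totalDegree := by
  classical
  have hsum : ((esymmAlgHom (Fin n) ℂ n q : MvPolynomial (Fin n) ℂ))
      = ∑ t ∈ q.support, esymmAlgHomMonomial (Fin n) t (coeff t q) := by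
    rw [esymmAlgHom_apply]
    conv_lhs => rw [q.as_sum]
    rw [map_sum (aeval fun i : Fin n => esymm (Fin n) ℂ ((i:ℕ) + 1))]
    exact Finset.sum_congr rfl fun t _ => (esymmAlgHom_apply _).symm
  obtain ⟨b, hb, hmax⟩ := Finset.exists_max_image q.support
    (fun t => supDegree toLex (esymmAlgHomMonomial (Fin n) t (coeff t q)))
    (MvPolynomial.support_nonempty.2 hq0)
  have hdt : ∀ t ∈ q.support,
      ⇑(ofLex (supDegree toLex (esymmAlgHomMonomial (Fin n) t (coeff t q))))
        = Fin.accumulate n n ⇑t :=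
    fun t ht => supDegree_esymmAlgHomMonomial (mem_support_iff.1 ht) t le_rfl
  have hstrict : ∀ t ∈ q.support, t ≠ b →
      supDegree toLex (esymmAlgHomMonomial (Fin n) t (coeff t q))
        < supDegree toLex (esymmAlgHomMonomial (Fin n) b (coeff b q)) := by
    intro t ht htb
    refine (hmax t ht).lt_of_ne fun he => htb ?_
    have : Fin.accumulate n n ⇑t = Fin.accumulate n n ⇑b := by
      rw [← hdt t ht, ← hdt b hb, he]
    exact DFunLike.ext' (Fin.accumulate_injective le_rfl this)
  have hsd := (supDegree_leadingCoeff_sum_eq (D := toLex) hb hstrict).1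
  rw [hsum, hsd]
  have hofb := hdt b hb
  have hb0 : (ofLex (supDegree toLex (esymmAlgHomMonomial (Fin n) b (coeff b q)))) 0
      = Fin.accumulate n n (⇑b) 0 := congrFun hofb 0
  rw [hb0, accumulate_zero_apply]
  refine le_antisymm (le_totalDegree hb) (Finset.sup_le fun t ht => ?_)
  have h1 : (ofLex (supDegree toLex (esymmAlgHomMonomial (Fin n) t (coeff t q)))) 0
      ≤ (ofLex (supDegree toLex (esymmAlgHomMonomial (Fin n) b (coeff b q)))) 0 := by
    apply lex_le_apply_zero
    have := hmax t ht
    simpa using this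
  rw [hb0, accumulate_zero_apply] at h1
  have h2 := congrFun (hdt t ht) 0
  rw [accumulate_zero_apply] at h2
  exact h2 ▸ h1

noncomputable def Psi (n : ℕ) : MvPolynomial (Fin n) ℂ →ₐ[ℂ] MvPolynomial (Fin n) ℂ :=
  ((symmetricSubalgebra (Fin n) ℂ).val).comp (esymmAlgHom (Fin n) ℂ n)

lemma Psi_apply (q : MvPolynomial (Fin n) ℂ) :
    Psi n q = ((esymmAlgHom (Fin n) ℂ n q : MvPolynomial (Fin n) ℂ)) := rfl

lemma Psi_inj : Function.Injective (Psi n) := fun a b h =>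
  esymmAlgHom_fin_injective ℂ le_rfl (Subtype.ext h)

lemma Psi_symm (a : MvPolynomial (Fin n) ℂ) : (Psi n a).IsSymmetric :=
  (esymmAlgHom (Fin n) ℂ n a).2

lemma isUnit_of_isUnit_image {a : MvPolynomial (Fin n) ℂ} (h : IsUnit (Psi n a)) :
    IsUnit a := by
  obtain ⟨u, hu⟩ := h
  have hv : Psi n a * (↑u⁻¹ : MvPolynomial (Fin n) ℂ) = 1 := by
    rw [← hu]; exact u.mul_inv
  have hane : Psi n a ≠ 0 := fun h0 => by simp [h0] at hv
  have hvne : (↑u⁻¹ : MvPolynomial (Fin n) ℂ) ≠ 0 := fun h0 => by simp [h0] at hv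
  have hd := supDegree_mul' hane hvne
  rw [hv, supDegree_one] at hd
  have hz : ofLex (supDegree toLex (Psi n a))
      + ofLex (supDegree toLex (↑u⁻¹ : MvPolynomial (Fin n) ℂ)) = 0 :=
    (congrArg ofLex hd).symm
  have hz0 : ofLex (supDegree toLex (Psi n a)) = 0 := by
    ext k
    have := congrArg (fun f : Fin n →₀ ℕ => f k) hz
    simp only [Finsupp.add_apply, Finsupp.coe_zero, Pi.zero_apply] at this
    show (ofLex (supDegree toLex (Psi n a))) k = (0 : Fin n →₀ ℕ) k
    simp only [Finsupp.coe_zero, Pi.zero_apply]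
    omega
  have haC : Psi n a = C (coeff 0 (Psi n a)) :=
    eq_C_of_supDegree_le (le_of_eq (supDegree_eq_of_ofLex_eq_zero hz0))
  have hPsiC : Psi n (C (MvPolynomial.coeff 0 (Psi n a))) = C (MvPolynomial.coeff 0 (Psi n a)) := by
    rw [← algebraMap_eq]
    exact (Psi n).commutes _
  have haeq : a = C (MvPolynomial.coeff 0 (Psi n a)) := Psi_inj (by rw [hPsiC, ← haC])
  have hc : MvPolynomial.coeff 0 (Psi n a) ≠ 0 := fun h0 => hane (by rw [haC, h0, map_zero])
  exact haeq ▸ (isUnit_iff_ne_zero.2 hc).map MvPolynomial.C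

lemma exists_L_dvd {A : MvPolynomial (Fin n) ℂ} (hA0 : A ≠ 0) (hA : ¬IsUnit A)
    (hAP : A ∣ P n) : ∃ i j : Fin n, i < j ∧ (X i + X j) ∣ A := by
  obtain ⟨π, hπirr, hπdvd⟩ := WfDvdMonoid.exists_irreducible_factor hA hA0
  have hπP : π ∣ P n := hπdvd.trans hAP
  have hπprime : Prime π := UniqueFactorizationMonoid.irreducible_iff_prime.1 hπirr
  rw [P] at hπP
  obtain ⟨j, -, hj⟩ := hπprime.exists_mem_finset_dvd hπP
  obtain ⟨i, hi, hij⟩ := hπprime.exists_mem_finset_dvd hj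
  have hlt : i < j := Finset.mem_Iio.1 hi
  have hassoc := hπirr.associated_of_dvd (irreducible_L hlt) hij
  exact ⟨i, j, hlt, hassoc.symm.dvd.trans hπdvd⟩

end QnAux

open MvPolynomial AddMonoidAlgebra QnAux in
theorem qn_degree_and_irreducible
    (n : ℕ) (hn : 2 ≤ n) (q : MvPolynomial (Fin n) ℂ)
    (hq : ∀ lam : Fin n → ℂ,
      MvPolynomial.eval (fun i : Fin n => esym n lam ((i : ℕ) + 1)) q =
        ∏ j : Fin n, ∏ i ∈ Finset.Iio j, (lam i + lam j)) :
    q.totalDegree = n - 1 ∧ Irreducible q := by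
  obtain ⟨m, rfl⟩ : ∃ m, n = m + 2 := ⟨n - 2, by omega⟩
  have hFP : ((esymmAlgHom (Fin (m + 2)) ℂ (m + 2) q : MvPolynomial (Fin (m + 2)) ℂ))
      = P (m + 2) := image_eq_P q hq
  have hq0 : q ≠ 0 := by
    intro h0
    apply P_ne_zero (n := m + 2)
    rw [← hFP, h0, map_zero]
    rfl
  constructor
  · -- degree
    have hdeg := totalDegree_of_image q hq0
    rw [hFP] at hdeg
    rw [← hdeg]
    exact (DFunLike.congr_fun (P_monic (n := m + 2)).2 0).trans staircase_zero
  · constructor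
    · intro hu
      have hPunit : IsUnit (P (m + 2)) := by
        rw [← hFP]
        exact hu.map (Psi (m + 2))
      have h01 : (0 : Fin (m + 2)) < 1 := by
        rw [Fin.lt_def]
        simp
      have hdvd1 : (X 0 + X 1 : MvPolynomial (Fin (m + 2)) ℂ)
          ∣ ∏ i ∈ Finset.Iio (1 : Fin (m + 2)), (X i + X (1 : Fin (m + 2))) :=
        Finset.dvd_prod_of_mem (fun i => X i + X (1 : Fin (m + 2))) (Finset.mem_Iio.2 h01)
      have hdvd2 : (∏ i ∈ Finset.Iio (1 : Fin (m + 2)),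
            (X i + X (1 : Fin (m + 2)) : MvPolynomial (Fin (m + 2)) ℂ)) ∣ P (m + 2) :=
        Finset.dvd_prod_of_mem
          (fun j : Fin (m + 2) => ∏ i ∈ Finset.Iio j, (X i + X j : MvPolynomial (Fin (m + 2)) ℂ))
          (Finset.mem_univ (1 : Fin (m + 2)))
      exact (irreducible_L h01).not_isUnit (isUnit_of_dvd_unit (hdvd1.trans hdvd2) hPunit)
    · intro a b hab
      have hFab : Psi (m + 2) a * Psi (m + 2) b = P (m + 2) := by
        rw [← map_mul, ← hab]
        exact hFP
      by_cases hA : IsUnit (Psi (m + 2) a)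
      · exact Or.inl (isUnit_of_isUnit_image hA)
      · have hA0 : Psi (m + 2) a ≠ 0 := fun h0 =>
          P_ne_zero (n := m + 2) (by rw [← hFab, h0, zero_mul])
        obtain ⟨i0, j0, h00, hdvd0⟩ := exists_L_dvd hA0 hA ⟨Psi (m + 2) b, hFab.symm⟩
        right
        by_contra hB'
        have hB : ¬ IsUnit (Psi (m + 2) b) := fun h => hB' (isUnit_of_isUnit_image h)
        have hB0 : Psi (m + 2) b ≠ 0 := fun h0 =>
          P_ne_zero (n := m + 2) (by rw [← hFab, h0, mul_zero])
        obtain ⟨i1, j1, h11, hdvd1⟩ := exists_L_dvd hB0 hB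
          ⟨Psi (m + 2) a, by rw [← hFab]; ring⟩
        have hAdvd : (X i1 + X j1) ∣ Psi (m + 2) a :=
          L_dvd_of_symm (Psi_symm a) h00 h11 hdvd0
        exact sq_not_dvd h11 (by rw [← hFab]; exact mul_dvd_mul hAdvd hdvd1)
end

section
/- Let p be a real polynomial in k variables. For v ∈ ℝ^k, define the face polynomial p_v of p in direction v to be the sum of those terms c_α X^α of p whose exponent vectors α maximize the linear functional α ↦ v·α over the support of p (for p = 0, set p_v = 0). Then p(x) ≥ 0 for all x in the open positive orthant ℝ^k_{>0} if and only if for every v ∈ ℝ^k the face polynomial p_v satisfies p_v(x) ≥ 0 for all x ∈ ℝ^k_{>0}. -/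
open Finset Filter Topology MvPolynomial

/-- The face polynomial of `p` in direction `v`: the sum of those terms of `p`
whose exponent vectors maximize the linear functional `α ↦ v ⬝ α` over the
support of `p` (equal to `0` when `p = 0`). -/
noncomputable def facePoly (k : ℕ) (p : MvPolynomial (Fin k) ℝ) (v : Fin k → ℝ) :
    MvPolynomial (Fin k) ℝ :=
  ∑ α ∈ p.support.filter (fun α => ∀ β ∈ p.support,
      (∑ i, v i * (β i : ℝ)) ≤ ∑ i, v i * (α i : ℝ)),
    MvPolynomial.monomial α (MvPolynomial.coeff α p)

theorem nonneg_on_positive_orthant_iff_all_faces_nonneg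
    (k : ℕ) (p : MvPolynomial (Fin k) ℝ) :
    (∀ x : Fin k → ℝ, (∀ i, 0 < x i) → 0 ≤ MvPolynomial.eval x p) ↔
      (∀ v : Fin k → ℝ, ∀ x : Fin k → ℝ, (∀ i, 0 < x i) →
        0 ≤ MvPolynomial.eval x (facePoly k p v)) := by
  constructor
  · intro hp v y hy
    rcases eq_or_ne p 0 with rfl | hp0
    · simp [facePoly]
    set S := p.support with hS
    have hSne : S.Nonempty := MvPolynomial.support_nonempty.2 hp0
    set L : (Fin k →₀ ℕ) → ℝ := fun α => ∑ i, v i * (α i : ℝ) with hL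
    set M : ℝ := S.sup' hSne L with hM
    set Y : (Fin k →₀ ℕ) → ℝ := fun α => ∏ i, y i ^ α i with hY
    set g : ℝ → ℝ := fun t => ∑ α ∈ S, coeff α p * Y α * t ^ (L α - M) with hg
    -- key evaluation identity
    have key : ∀ t : ℝ, 0 < t →
        MvPolynomial.eval (fun i => y i * t ^ v i) p = t ^ M * g t := by
      intro t ht
      rw [MvPolynomial.eval_eq', hg, Finset.mul_sum]
      refine Finset.sum_congr rfl fun α hα => ?_
      have : ∏ i, (y i * t ^ v i) ^ α i = Y α * t ^ L α := by
        rw [hY, hL, Real.rpow_sum_of_pos ht, ← Finset.prod_mul_distrib]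
        refine Finset.prod_congr rfl fun i _ => ?_
        rw [mul_pow, ← Real.rpow_natCast (t ^ v i) (α i), ← Real.rpow_mul ht.le]
      rw [this]
      rw [mul_comm (t ^ M), mul_assoc, mul_assoc, ← Real.rpow_add ht]
      ring_nf
    -- g is eventually nonneg
    have hgpos : ∀ᶠ t in atTop, 0 ≤ g t := by
      filter_upwards [eventually_gt_atTop (0 : ℝ)] with t ht
      have hx : ∀ i, 0 < y i * t ^ v i := fun i =>
        mul_pos (hy i) (Real.rpow_pos_of_pos ht _)
      have := hp _ hx
      rw [key t ht] at this
      exact nonneg_of_mul_nonneg_right this (Real.rpow_pos_of_pos ht _)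
    -- g tends to eval y (facePoly k p v)
    have hface : MvPolynomial.eval y (facePoly k p v) =
        ∑ α ∈ S, coeff α p * Y α * (if L α = M then 1 else 0) := by
      rw [facePoly, map_sum]
      conv_rhs => simp only [mul_ite, mul_one, mul_zero]
      rw [← Finset.sum_filter]
      refine Finset.sum_congr ?_ fun α hα => ?_
      · apply Finset.filter_congr
        intro α hα
        constructor
        · intro h
          exact le_antisymm (Finset.le_sup' L hα) (Finset.sup'_le hSne L h)
        · intro h β hβ
          show L β ≤ L α
          rw [h]; exact Finset.le_sup' L hβ
      · rw [eval_monomial]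
        congr 1
        rw [hY]
        exact Finsupp.prod_pow α fun i => y i
    have hlim : Tendsto g atTop (𝓝 (MvPolynomial.eval y (facePoly k p v))) := by
      rw [hface]
      apply tendsto_finset_sum
      intro α hα
      rcases eq_or_lt_of_le (show L α ≤ M from Finset.le_sup' L hα) with he | hlt
      · simp only [he, if_pos rfl, sub_self]
        simpa using tendsto_const_nhds.congr fun t => by rw [Real.rpow_zero, mul_one]
      · simp only [if_neg (ne_of_lt hlt), mul_zero]
        have : Tendsto (fun t : ℝ => t ^ (L α - M)) atTop (𝓝 0) := by
          have := tendsto_rpow_neg_atTop (y := M - L α) (by linarith)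
          simpa [neg_sub] using this
        simpa using (this.const_mul (coeff α p * Y α)).congr fun t => by ring
    exact ge_of_tendsto hlim hgpos
  · intro h x hx
    have := h 0 x hx
    have hfp : facePoly k p 0 = p := by
      rw [facePoly]
      rw [Finset.filter_true_of_mem (by simp)]
      exact (MvPolynomial.as_sum p).symm
    rwa [hfp] at this
end

section
/- Let p be a real polynomial in k variables. Suppose there exist vectors v, w ∈ ℝ^k and exponent vectors α, γ in the support of p such that: the coefficient of X^α in p is positive, the coefficient of X^γ in p is negative, v·α > v·β for every β in the support of p with β ≠ α, and w·γ > w·β for every β in the support of p with β ≠ γ. Then p takes both strictly positive and strictly negative values on the open positive orthant ℝ^k_{>0}, i.e. p is sign-indefinite on the positive orthant. -/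
open Filter Real Finset

lemma exists_pos_eval (k : ℕ) (p : MvPolynomial (Fin k) ℝ) (v : Fin k → ℝ)
    (α : Fin k →₀ ℕ) (hα : α ∈ p.support)
    (hαpos : 0 < MvPolynomial.coeff α p)
    (hv : ∀ β ∈ p.support, β ≠ α → (∑ i, v i * (β i : ℝ)) < ∑ i, v i * (α i : ℝ)) :
    ∃ x : Fin k → ℝ, (∀ i, 0 < x i) ∧ 0 < MvPolynomial.eval x p := by
  set d : (Fin k →₀ ℕ) → ℝ := fun β => ∑ i, v i * (β i : ℝ) with hd
  have heval : ∀ t : ℝ, MvPolynomial.eval (fun i => Real.exp (t * v i)) p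
      = ∑ β ∈ p.support, MvPolynomial.coeff β p * Real.exp (t * d β) := by
    intro t
    rw [MvPolynomial.eval_eq']
    refine Finset.sum_congr rfl fun β _ => ?_
    congr 1
    have : ∀ i : Fin k, Real.exp (t * v i) ^ (β i) = Real.exp ((β i : ℝ) * (t * v i)) := by
      intro i; rw [← Real.exp_nat_mul]
    simp_rw [this, ← Real.exp_sum]
    congr 1
    rw [hd, Finset.mul_sum]
    refine Finset.sum_congr rfl fun i _ => by ring
  have hlim : Tendsto (fun t : ℝ => ∑ β ∈ p.support,
      MvPolynomial.coeff β p * Real.exp (t * (d β - d α))) atTop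
      (nhds (MvPolynomial.coeff α p)) := by
    have : (MvPolynomial.coeff α p)
        = ∑ β ∈ p.support, (if β = α then MvPolynomial.coeff α p else 0) := by
      rw [Finset.sum_ite_eq' p.support α (fun _ => MvPolynomial.coeff α p)]
      simp [hα]
    rw [this]
    refine tendsto_finset_sum _ fun β hβ => ?_
    by_cases hba : β = α
    · subst hba
      simp only [if_true, sub_self, mul_zero, Real.exp_zero]
      simpa using tendsto_const_nhds
    · simp only [if_neg hba]
      have he : d β - d α < 0 := sub_neg.mpr (hv β hβ hba)
      have h1 : Tendsto (fun t : ℝ => t * (d β - d α)) atTop atBot :=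
        tendsto_id.atTop_mul_const_of_neg he
      have h2 : Tendsto (fun t : ℝ => Real.exp (t * (d β - d α))) atTop (nhds 0) :=
        Real.tendsto_exp_atBot.comp h1
      simpa using h2.const_mul (MvPolynomial.coeff β p)
  obtain ⟨t, ht⟩ := (hlim.eventually (lt_mem_nhds hαpos)).exists
  refine ⟨fun i => Real.exp (t * v i), fun i => Real.exp_pos _, ?_⟩
  rw [heval t]
  have key : ∑ β ∈ p.support, MvPolynomial.coeff β p * Real.exp (t * d β)
      = Real.exp (t * d α) * ∑ β ∈ p.support,
        MvPolynomial.coeff β p * Real.exp (t * (d β - d α)) := by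
    rw [Finset.mul_sum]
    refine Finset.sum_congr rfl fun β _ => ?_
    rw [show t * d β = t * d α + t * (d β - d α) by ring, Real.exp_add]; ring
  rw [key]
  exact mul_pos (Real.exp_pos _) ht

theorem mixed_vertices_implies_sign_indefinite
    (k : ℕ) (p : MvPolynomial (Fin k) ℝ) (v w : Fin k → ℝ)
    (α γ : Fin k →₀ ℕ)
    (hα : α ∈ p.support) (hγ : γ ∈ p.support)
    (hαpos : 0 < MvPolynomial.coeff α p)
    (hγneg : MvPolynomial.coeff γ p < 0)
    (hv : ∀ β ∈ p.support, β ≠ α → (∑ i, v i * (β i : ℝ)) < ∑ i, v i * (α i : ℝ))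
    (hw : ∀ β ∈ p.support, β ≠ γ → (∑ i, w i * (β i : ℝ)) < ∑ i, w i * (γ i : ℝ)) :
    (∃ x : Fin k → ℝ, (∀ i, 0 < x i) ∧ 0 < MvPolynomial.eval x p) ∧
      (∃ y : Fin k → ℝ, (∀ i, 0 < y i) ∧ MvPolynomial.eval y p < 0) := by
  constructor
  · exact exists_pos_eval k p v α hα hαpos hv
  · have hsup : (-p).support = p.support := MvPolynomial.support_neg (Fin k)
    have hγ' : γ ∈ (-p).support := by rwa [hsup]
    have hpos' : 0 < MvPolynomial.coeff γ (-p) := by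
      rw [MvPolynomial.coeff_neg]; linarith
    have hw' : ∀ β ∈ (-p).support, β ≠ γ →
        (∑ i, w i * (β i : ℝ)) < ∑ i, w i * (γ i : ℝ) := by
      intro β hβ hne; exact hw β (by rwa [hsup] at hβ) hne
    obtain ⟨y, hy1, hy2⟩ := exists_pos_eval k (-p) w γ hγ' hpos' hw'
    refine ⟨y, hy1, ?_⟩
    rw [map_neg] at hy2; linarith
end

section
/- Let A and B be n×n real sign patterns (n ≥ 2) with A a sub-pattern of B. Then: (i) if some M ∈ Q_A has D2(M) > 0, then some N ∈ Q_B has D2(N) > 0; (ii) if some M ∈ Q_A has D2(M) < 0, then some N ∈ Q_B has D2(N) < 0; (iii) if D2(N) = 0 for every N ∈ Q_B, then D2(M) = 0 for every M ∈ Q_A; (iv) if D2 takes both strictly positive and strictly negative values on Q_A, then D2 takes both strictly positive and strictly negative values on Q_B. -/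
/-- The `k`-th minor-sum of an `n × n` real matrix `M`: the sum of its `k × k`
principal minors, i.e. `(-1)^k` times the coefficient of `X^(n-k)` in the
characteristic polynomial; extended to integer indices by `0` outside `0 ≤ k ≤ n`. -/
noncomputable def minorSum (n : ℕ) (M : Matrix (Fin n) (Fin n) ℝ) (k : ℤ) : ℝ :=
  if 0 ≤ k ∧ k ≤ (n : ℤ) then (-1) ^ k.toNat * (Matrix.charpoly M).coeff (n - k.toNat)
  else 0

/-- The determinant of the second additive compound of `M`, computed as the
determinant of the `(n-1) × (n-1)` matrix whose `(i,j)` entry (1-indexed) is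
`J_{2i-j}(M)`. -/
noncomputable def D2 (n : ℕ) (M : Matrix (Fin n) (Fin n) ℝ) : ℝ :=
  Matrix.det (Matrix.of fun i j : Fin (n - 1) =>
    minorSum n M (2 * ((i : ℕ) : ℤ) + 2 - (((j : ℕ) : ℤ) + 1)))

/-- The qualitative class of a sign pattern `A`: all real matrices whose entries
have (entrywise) the same sign as those of `A`. -/
def qualClass (n : ℕ) (A : Matrix (Fin n) (Fin n) ℝ) : Set (Matrix (Fin n) (Fin n) ℝ) :=
  {M | ∀ i j, Real.sign (M i j) = Real.sign (A i j)}

/-- `A` is a sub-pattern of `B`: every entry of `A` is either zero or has the same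
strict sign as the corresponding entry of `B`. -/
def subPattern (n : ℕ) (A B : Matrix (Fin n) (Fin n) ℝ) : Prop :=
  ∀ i j, A i j = 0 ∨ Real.sign (A i j) = Real.sign (B i j)


lemma continuous_charpoly_coeff (n k : ℕ) :
    Continuous fun M : Matrix (Fin n) (Fin n) ℝ => (Matrix.charpoly M).coeff k := by
  classical
  set G : Matrix (Fin n) (Fin n) (MvPolynomial (Fin n × Fin n) ℝ) :=
    Matrix.of fun i j => MvPolynomial.X (i, j) with hG
  have key : ∀ M : Matrix (Fin n) (Fin n) ℝ,
      (Matrix.charpoly M).coeff k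
        = MvPolynomial.eval (fun p => M p.1 p.2) ((Matrix.charpoly G).coeff k) := by
    intro M
    have h1 : G.map (MvPolynomial.eval (fun p => M p.1 p.2)) = M := by
      ext i j; simp [hG]
    conv_lhs => rw [← h1]
    rw [Matrix.charpoly_map, Polynomial.coeff_map]
  simp only [key]
  have h2 : Continuous fun M : Matrix (Fin n) (Fin n) ℝ =>
      (fun p : Fin n × Fin n => M p.1 p.2) :=
    continuous_pi fun p => (continuous_apply p.2).comp (continuous_apply p.1)
  exact (MvPolynomial.continuous_eval (p := (Matrix.charpoly G).coeff k)).comp h2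

lemma continuous_minorSum (n : ℕ) (k : ℤ) :
    Continuous fun M : Matrix (Fin n) (Fin n) ℝ => minorSum n M k := by
  unfold minorSum
  split_ifs
  · exact continuous_const.mul (continuous_charpoly_coeff n _)
  · exact continuous_const

lemma continuous_D2 (n : ℕ) : Continuous (D2 n) := by
  unfold D2
  exact Continuous.matrix_det
    (continuous_matrix fun i j => continuous_minorSum n _)

lemma sign_mul_pos' {ε x : ℝ} (hε : 0 < ε) : Real.sign (ε * x) = Real.sign x := by
  rcases lt_trichotomy x 0 with h | h | h
  · rw [Real.sign_of_neg h, Real.sign_of_neg (mul_neg_of_pos_of_neg hε h)]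
  · simp [h]
  · rw [Real.sign_of_pos h, Real.sign_of_pos (mul_pos hε h)]

lemma D2_key_lemma (n : ℕ) (A B : Matrix (Fin n) (Fin n) ℝ) (hAB : subPattern n A B)
    (M : Matrix (Fin n) (Fin n) ℝ) (hM : M ∈ qualClass n A)
    (U : Set ℝ) (hU : IsOpen U) (hMU : D2 n M ∈ U) :
    ∃ N ∈ qualClass n B, D2 n N ∈ U := by
  classical
  set P : Matrix (Fin n) (Fin n) ℝ :=
    Matrix.of fun i j => if A i j = 0 then B i j else 0 with hP
  have hmem : ∀ ε : ℝ, 0 < ε → (M + ε • P) ∈ qualClass n B := by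
    intro ε hε i j
    by_cases hA : A i j = 0
    · have hM0 : M i j = 0 := by
        have := hM i j; rw [hA, Real.sign_zero] at this
        exact Real.sign_eq_zero_iff.mp this
      simp only [Matrix.add_apply, Matrix.smul_apply, hP, Matrix.of_apply, if_pos hA,
        hM0, zero_add, smul_eq_mul]
      exact sign_mul_pos' hε
    · have hsign := (hAB i j).resolve_left hA
      simp only [Matrix.add_apply, Matrix.smul_apply, hP, Matrix.of_apply, if_neg hA,
        smul_zero, add_zero]
      rw [hM i j, hsign]
  have hcont : Continuous fun ε : ℝ => D2 n (M + ε • P) :=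
    (continuous_D2 n).comp (continuous_const.add (continuous_id.smul continuous_const))
  have h0 : D2 n (M + (0 : ℝ) • P) ∈ U := by simpa using hMU
  have hev : ∀ᶠ ε : ℝ in nhds 0, D2 n (M + ε • P) ∈ U :=
    hcont.continuousAt.preimage_mem_nhds (hU.mem_nhds h0)
  have hev' : ∀ᶠ ε : ℝ in nhdsWithin 0 (Set.Ioi 0), D2 n (M + ε • P) ∈ U :=
    hev.filter_mono nhdsWithin_le_nhds
  obtain ⟨ε, hεU, hεpos⟩ := (hev'.and eventually_mem_nhdsWithin).exists
  exact ⟨M + ε • P, hmem ε hεpos, hεU⟩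

theorem D2_inheritance
    (n : ℕ) (hn : 2 ≤ n) (A B : Matrix (Fin n) (Fin n) ℝ)
    (hAB : subPattern n A B) :
    ((∃ M ∈ qualClass n A, 0 < D2 n M) → ∃ N ∈ qualClass n B, 0 < D2 n N) ∧
    ((∃ M ∈ qualClass n A, D2 n M < 0) → ∃ N ∈ qualClass n B, D2 n N < 0) ∧
    ((∀ N ∈ qualClass n B, D2 n N = 0) → ∀ M ∈ qualClass n A, D2 n M = 0) ∧
    (((∃ M ∈ qualClass n A, 0 < D2 n M) ∧ (∃ M ∈ qualClass n A, D2 n M < 0)) →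
      ((∃ N ∈ qualClass n B, 0 < D2 n N) ∧ (∃ N ∈ qualClass n B, D2 n N < 0))) := by
  have hpos : (∃ M ∈ qualClass n A, 0 < D2 n M) → ∃ N ∈ qualClass n B, 0 < D2 n N := by
    rintro ⟨M, hM, hD⟩
    exact D2_key_lemma n A B hAB M hM (Set.Ioi 0) isOpen_Ioi hD
  have hneg : (∃ M ∈ qualClass n A, D2 n M < 0) → ∃ N ∈ qualClass n B, D2 n N < 0 := by
    rintro ⟨M, hM, hD⟩
    exact D2_key_lemma n A B hAB M hM (Set.Iio 0) isOpen_Iio hD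
  refine ⟨hpos, hneg, ?_, fun ⟨h1, h2⟩ => ⟨hpos h1, hneg h2⟩⟩
  intro hB M hM
  by_contra hne
  obtain ⟨N, hN, hNne⟩ :=
    D2_key_lemma n A B hAB M hM ({0}ᶜ) isOpen_compl_singleton hne
  exact hNne (hB N hN)
end

section
/- Let n ≥ 2 and let M be an n×n real matrix whose associated digraph is bipartite; that is, suppose there exists a function c from {1,…,n} to {0,1} such that M_{ij} ≠ 0 implies c(i) ≠ c(j). Then D2(M) = 0. -/
open Polynomial Matrix

lemma coeff_comp_neg_X (p : ℝ[X]) (m : ℕ) :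
    (p.comp (-X)).coeff m = (-1) ^ m * p.coeff m := by
  induction p using Polynomial.induction_on' with
  | add p q hp hq => simp [Polynomial.add_comp, hp, hq, mul_add]
  | monomial e a =>
    rw [Polynomial.comp, Polynomial.eval₂_monomial]
    rw [neg_pow, show ((-1 : ℝ[X]) ^ e * X ^ e) = ((-1 : ℝ) ^ e) • X ^ e by
      simp [Algebra.smul_def]]
    rw [mul_smul_comm, Polynomial.coeff_smul, Polynomial.coeff_C_mul,
      Polynomial.coeff_X_pow, Polynomial.coeff_monomial, smul_eq_mul]
    by_cases h : e = m
    · subst h; simp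
    · rw [if_neg h, if_neg (fun hh => h hh.symm)]; ring

theorem D2_eq_zero_of_bipartite
    (n : ℕ) (hn : 2 ≤ n) (M : Matrix (Fin n) (Fin n) ℝ)
    (c : Fin n → Fin 2) (hc : ∀ i j, M i j ≠ 0 → c i ≠ c j) :
    D2 n M = 0 := by
  classical
  set d : Fin n → ℝ := fun i => if c i = 0 then 1 else -1 with hd
  have hd2 : ∀ i, d i * d i = 1 := by
    intro i; simp only [hd]; split_ifs <;> norm_num
  have hdiag : ∀ i, M i i = 0 := by
    intro i; by_contra h; exact hc i i h rfl
  have hdd : ∀ i j, M i j ≠ 0 → d i * d j = -1 := by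
    intro i j h
    have hne := hc i j h
    have : (c i = 0 ∧ c j = 1) ∨ (c i = 1 ∧ c j = 0) := by
      revert hne; generalize c i = a; generalize c j = b; revert a b; decide
    rcases this with ⟨h1, h2⟩ | ⟨h1, h2⟩ <;> simp [hd, h1, h2]
  set D : Matrix (Fin n) (Fin n) ℝ[X] := Matrix.diagonal (fun i => C (d i)) with hD
  -- the mapped charmatrix equals `-(D * charmatrix M * D)`
  have h1 : (Matrix.charmatrix M).map (Polynomial.eval₂RingHom Polynomial.C (-X))
      = -(D * Matrix.charmatrix M * D) := by
    refine Matrix.ext fun i j => ?_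
    simp only [Matrix.map_apply, Matrix.neg_apply, hD,
      Matrix.mul_diagonal, Matrix.diagonal_mul]
    by_cases hij : i = j
    · subst hij
      rw [Matrix.charmatrix_apply_eq, hdiag]
      have hx : C (d i) * (X - C (0:ℝ)) * C (d i) = X := by
        have h9 : C (d i) * (X - C (0:ℝ)) * C (d i) = (d i * d i) • X := by
          simp [Algebra.smul_def]; ring
        rw [h9, hd2, one_smul]
      rw [hx]
      simp
    · rw [Matrix.charmatrix_apply_ne _ _ _ hij]
      simp only [RingHom.toMonoidHom_eq_coe, OneHom.toFun_eq_coe, MonoidHom.toOneHom_coe,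
        MonoidHom.coe_coe, coe_eval₂RingHom, eval₂_neg, eval₂_C]
      by_cases h : M i j = 0
      · simp [h]
      · rw [show C (d i) * -C (M i j) * C (d j) = -C (d i * d j * M i j) by
          simp; ring]
        rw [hdd i j h]; simp
  have hdetD2 : (D * D).det = 1 := by
    simp only [hD, Matrix.diagonal_mul_diagonal, Matrix.det_diagonal]
    rw [show (fun i => C (d i) * C (d i)) = fun i => C (d i * d i) by
      funext i; simp]
    simp [hd2]
  have key : (Matrix.charpoly M).comp (-X) = (-1) ^ n * Matrix.charpoly M := by
    have := (Polynomial.eval₂RingHom Polynomial.C (-X : ℝ[X])).map_det (Matrix.charmatrix M)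
    rw [RingHom.mapMatrix_apply, h1] at this
    have heval : (Polynomial.eval₂RingHom Polynomial.C (-X : ℝ[X])) (Matrix.charmatrix M).det
        = (Matrix.charpoly M).comp (-X) := rfl
    rw [heval, Matrix.det_neg, Matrix.det_mul, Matrix.det_mul] at this
    rw [this, Matrix.charpoly]
    have : D.det * (Matrix.charmatrix M).det * D.det
        = (D * D).det * (Matrix.charmatrix M).det := by
      rw [Matrix.det_mul]; ring
    rw [this, hdetD2]
    simp [Fintype.card_fin]
  -- coefficients with index of parity different from n vanish
  have hcoeff : ∀ m : ℕ, (-1 : ℝ) ^ m ≠ (-1) ^ n → (Matrix.charpoly M).coeff m = 0 := by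
    intro m hm
    have h2 := congrArg (fun p => Polynomial.coeff p m) key
    simp only [coeff_comp_neg_X] at h2
    rw [show ((-1 : ℝ[X]) ^ n * Matrix.charpoly M) = ((-1 : ℝ) ^ n) •
        Matrix.charpoly M by simp [Algebra.smul_def], Polynomial.coeff_smul,
        smul_eq_mul] at h2
    -- from (-1)^m * a = (-1)^n * a and (-1)^m ≠ (-1)^n, conclude a = 0
    have hpow : ∀ r : ℕ, (-1 : ℝ) ^ r = 1 ∨ (-1 : ℝ) ^ r = -1 := fun r =>
      (Nat.even_or_odd r).imp (fun h => h.neg_one_pow) (fun h => h.neg_one_pow)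
    have hmn := hpow m
    have hnn := hpow n
    rcases hmn with h3 | h3 <;> rcases hnn with h4 | h4 <;>
      rw [h3, h4] at h2 hm <;> first | (exfalso; exact hm rfl) | linarith
  -- minorSum vanishes at odd arguments
  have hodd : ∀ k : ℤ, Odd k → minorSum n M k = 0 := by
    intro k hk
    unfold minorSum
    split_ifs with h
    · obtain ⟨hk0, hkn⟩ := h
      have hktn : Odd k.toNat := by
        rcases hk with ⟨t, ht⟩
        have ht0 : 0 ≤ t := by omega
        refine ⟨t.toNat, ?_⟩; omega
      have hkle : k.toNat ≤ n := by omega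
      have hpar : (-1 : ℝ) ^ (n - k.toNat) ≠ (-1) ^ n := by
        intro hcon
        have h6 : (-1 : ℝ) ^ (n - k.toNat) * (-1) ^ k.toNat = (-1) ^ n := by
          rw [← pow_add]; congr 1; omega
        rw [hcon, hktn.neg_one_pow, mul_neg_one] at h6
        have hnz : (-1 : ℝ) ^ n ≠ 0 := pow_ne_zero _ (by norm_num)
        exact hnz (by linarith)
      rw [hcoeff _ hpar, mul_zero]
    · rfl
  -- the first column of the D2 matrix is zero
  have hn1 : 0 < n - 1 := by omega
  unfold D2
  apply Matrix.det_eq_zero_of_column_eq_zero ⟨0, hn1⟩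
  intro i
  simp only [Matrix.of_apply]
  apply hodd
  refine ⟨(i : ℕ), by push_cast; ring⟩
end

section
/- Let λ_1, …, λ_5 be complex numbers and for 1 ≤ k ≤ 5 let J_k = e_k(λ_1,…,λ_5) be the k-th elementary symmetric polynomial in λ_1,…,λ_5. Then ∏_{1 ≤ i < j ≤ 5}(λ_i + λ_j) = −J_5² + 2J_1J_4J_5 + J_2J_3J_5 − J_1J_2²J_5 − J_1²J_4² − J_3²J_4 + J_1J_2J_3J_4. -/
/-- The `k`-th elementary symmetric function of `lam : Fin 5 → ℂ`. -/
noncomputable def esym5 (lam : Fin 5 → ℂ) (k : ℕ) : ℂ :=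
  ∑ s ∈ Finset.powersetCard k (Finset.univ : Finset (Fin 5)), ∏ i ∈ s, lam i

lemma esym5_1 (lam : Fin 5 → ℂ) : esym5 lam 1 = lam 0 + lam 1 + lam 2 + lam 3 + lam 4 := by
  have h : Finset.powersetCard 1 (Finset.univ : Finset (Fin 5)) =
      ({{0},{1},{2},{3},{4}} : Finset (Finset (Fin 5))) := by decide
  rw [esym5, h]
  simp +decide [Finset.sum_insert, Finset.prod_insert]
  ring

lemma esym5_2 (lam : Fin 5 → ℂ) : esym5 lam 2 = lam 0*lam 1 + lam 0*lam 2 + lam 0*lam 3 + lam 0*lam 4 + lam 1*lam 2 + lam 1*lam 3 + lam 1*lam 4 + lam 2*lam 3 + lam 2*lam 4 + lam 3*lam 4 := by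
  have h : Finset.powersetCard 2 (Finset.univ : Finset (Fin 5)) =
      ({{0,1},{0,2},{0,3},{0,4},{1,2},{1,3},{1,4},{2,3},{2,4},{3,4}} : Finset (Finset (Fin 5))) := by decide
  rw [esym5, h]
  simp +decide [Finset.sum_insert, Finset.prod_insert]
  ring

lemma esym5_3 (lam : Fin 5 → ℂ) : esym5 lam 3 = lam 0*lam 1*lam 2 + lam 0*lam 1*lam 3 + lam 0*lam 1*lam 4 + lam 0*lam 2*lam 3 + lam 0*lam 2*lam 4 + lam 0*lam 3*lam 4 + lam 1*lam 2*lam 3 + lam 1*lam 2*lam 4 + lam 1*lam 3*lam 4 + lam 2*lam 3*lam 4 := by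
  have h : Finset.powersetCard 3 (Finset.univ : Finset (Fin 5)) =
      ({{0,1,2},{0,1,3},{0,1,4},{0,2,3},{0,2,4},{0,3,4},{1,2,3},{1,2,4},{1,3,4},{2,3,4}} : Finset (Finset (Fin 5))) := by decide
  rw [esym5, h]
  simp +decide [Finset.sum_insert, Finset.prod_insert]
  ring

lemma esym5_4 (lam : Fin 5 → ℂ) : esym5 lam 4 = lam 0*lam 1*lam 2*lam 3 + lam 0*lam 1*lam 2*lam 4 + lam 0*lam 1*lam 3*lam 4 + lam 0*lam 2*lam 3*lam 4 + lam 1*lam 2*lam 3*lam 4 := by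
  have h : Finset.powersetCard 4 (Finset.univ : Finset (Fin 5)) =
      ({{0,1,2,3},{0,1,2,4},{0,1,3,4},{0,2,3,4},{1,2,3,4}} : Finset (Finset (Fin 5))) := by decide
  rw [esym5, h]
  simp +decide [Finset.sum_insert, Finset.prod_insert]
  ring

lemma esym5_5 (lam : Fin 5 → ℂ) : esym5 lam 5 = lam 0*lam 1*lam 2*lam 3*lam 4 := by
  have h : Finset.powersetCard 5 (Finset.univ : Finset (Fin 5)) =
      ({{0,1,2,3,4}} : Finset (Finset (Fin 5))) := by decide
  rw [esym5, h]
  simp +decide [Finset.sum_insert, Finset.prod_insert]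
  ring

theorem q5_formula (lam : Fin 5 → ℂ) :
    (∏ j : Fin 5, ∏ i ∈ Finset.Iio j, (lam i + lam j)) =
      -(esym5 lam 5) ^ 2 + 2 * esym5 lam 1 * esym5 lam 4 * esym5 lam 5
        + esym5 lam 2 * esym5 lam 3 * esym5 lam 5
        - esym5 lam 1 * (esym5 lam 2) ^ 2 * esym5 lam 5
        - (esym5 lam 1) ^ 2 * (esym5 lam 4) ^ 2
        - (esym5 lam 3) ^ 2 * esym5 lam 4
        + esym5 lam 1 * esym5 lam 2 * esym5 lam 3 * esym5 lam 4 := by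
  have h0 : Finset.Iio (0 : Fin 5) = ∅ := by decide
  have h1 : Finset.Iio (1 : Fin 5) = {0} := by decide
  have h2 : Finset.Iio (2 : Fin 5) = {0, 1} := by decide
  have h3 : Finset.Iio (3 : Fin 5) = {0, 1, 2} := by decide
  have h4 : Finset.Iio (4 : Fin 5) = {0, 1, 2, 3} := by decide
  rw [Fin.prod_univ_five, h0, h1, h2, h3, h4,
    esym5_1, esym5_2, esym5_3, esym5_4, esym5_5]
  simp [Finset.prod_insert]
  ring
end
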